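/- arXiv:1110.6917 — 4 statements merged into one kernel-verified Lean document; each statement's English description precedes it below -/
import Mathlib

section
/- Let τ ∈ ℍ and α ∈ ℂ with θ(α,τ) ≠ 0. For ξ ∈ ℂ write r(ξ) = Im(ξ)/Im(τ), and set g(ξ) = e(α·r(ξ))·F(ξ,α,τ) wherever θ(ξ,τ) ≠ 0. Then for every ξ ∈ ℂ such that θ(ξ,τ), θ(ξ+1,τ) and θ(ξ+τ,τ) are all nonzero: g(ξ+1) = g(ξ) and g(ξ+τ) = g(ξ); that is, g is invariant under translation by the lattice ℤ+ℤτ. -/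
open Complex Filter

/-- `e(x) = exp(2πi·x)`. -/
noncomputable def ee (x : ℂ) : ℂ := Complex.exp (2 * (Real.pi : ℂ) * Complex.I * x)

lemma ee_add (x y : ℂ) : ee (x + y) = ee x * ee y := by
  rw [ee, ee, ee, ← Complex.exp_add]; congr 1; ring

lemma ee_ne (x : ℂ) : ee x ≠ 0 := Complex.exp_ne_zero _

lemma ee_zero : ee 0 = 1 := by simp [ee]

lemma ee_neg (x : ℂ) : ee (-x) = (ee x)⁻¹ := by
  apply eq_inv_of_mul_eq_one_left
  rw [← ee_add]; simp [ee_zero]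

lemma ee_sq (x : ℂ) : ee x = ee (x/2) * ee (x/2) := by
  rw [← ee_add]; congr 1; ring

lemma ee_one : ee 1 = 1 := by
  rw [ee, show 2*(Real.pi:ℂ)*Complex.I*1 = 2*Real.pi*Complex.I by ring,
    Complex.exp_two_pi_mul_I]

lemma ee_half : ee (1/2) = -1 := by
  rw [ee, show 2*(Real.pi:ℂ)*Complex.I*(1/2) = Real.pi*Complex.I by ring,
    Complex.exp_pi_mul_I]

lemma norm_ee_lt_one {τ : ℂ} (hτ : 0 < τ.im) : ‖ee τ‖ < 1 := by
  rw [ee, Complex.norm_exp]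
  apply Real.exp_lt_one_iff.mpr
  have : (2*(Real.pi:ℂ)*Complex.I*τ).re = -(2*Real.pi*τ.im) := by
    simp [Complex.mul_re, Complex.mul_im]
  rw [this]
  nlinarith [Real.pi_pos, hτ]

lemma multipliable_aux {q : ℂ} (hq : ‖q‖ < 1) (c : ℂ) :
    Multipliable (fun j : ℕ => 1 - q ^ j * c) := by
  by_cases h : ∀ j : ℕ, 1 - q ^ j * c ≠ 0
  · refine Complex.multipliable_of_summable_log ?_
    have hg : Summable (fun n : ℕ => (3/2 : ℝ) * (‖c‖ * ‖q‖ ^ n)) :=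
      (((summable_geometric_of_lt_one (norm_nonneg q) hq).mul_left ‖c‖).mul_left (3/2))
    apply Summable.of_norm_bounded_eventually hg
    rw [Nat.cofinite_eq_atTop]
    have ht : Tendsto (fun n : ℕ => ‖c‖ * ‖q‖ ^ n) atTop (nhds 0) := by
      simpa using (tendsto_pow_atTop_nhds_zero_of_lt_one (norm_nonneg q) hq).const_mul ‖c‖
    filter_upwards [ht.eventually (eventually_le_nhds (by norm_num : (0:ℝ) < 1/2))] with n hn
    have h12 : ‖-(q ^ n * c)‖ ≤ 1/2 := by
      rw [norm_neg, norm_mul, norm_pow, mul_comm]; exact hn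
    have hb := Complex.norm_log_one_add_half_le_self h12
    rw [show (1 : ℂ) - q ^ n * c = 1 + -(q ^ n * c) by ring]
    calc ‖Complex.log (1 + -(q ^ n * c))‖ ≤ 3/2 * ‖-(q ^ n * c)‖ := hb
      _ = 3/2 * (‖c‖ * ‖q‖ ^ n) := by rw [norm_neg, norm_mul, norm_pow]; ring
  · push_neg at h
    obtain ⟨j, hj⟩ := h
    refine ⟨0, ?_⟩
    have he : (fun _ : Finset ℕ => (0:ℂ)) =ᶠ[atTop]
        (fun s : Finset ℕ => ∏ i ∈ s, (1 - q ^ i * c)) := by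
      filter_upwards [eventually_ge_atTop ({j} : Finset ℕ)] with s hs
      exact (Finset.prod_eq_zero (Finset.singleton_subset_iff.mp hs) hj).symm
    exact tendsto_const_nhds.congr' he

lemma multipliable_shift {q : ℂ} (hq : ‖q‖ < 1) (c : ℂ) (k : ℕ) :
    Multipliable (fun j : ℕ => 1 - q ^ (j + k) * c) := by
  have heq : (fun j : ℕ => 1 - q ^ (j + k) * c) = fun j : ℕ => 1 - q ^ j * (q ^ k * c) := by
    funext j; rw [pow_add]; ring
  rw [heq]; exact multipliable_aux hq _

/-- The theta function `θ(ξ,τ)`, with `q = e(τ)`. -/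
noncomputable def theta (ξ τ : ℂ) : ℂ :=
  ee (τ / 12) * (ee (ξ / 2) - ee (-ξ / 2)) *
    ∏' j : ℕ, ((1 - ee τ ^ (j + 1) * ee ξ) * (1 - ee τ ^ (j + 1) * ee (-ξ)))

lemma theta_add_one (ξ τ : ℂ) : theta (ξ + 1) τ = -theta ξ τ := by
  unfold theta
  have h1 : ee ((ξ + 1) / 2) = -ee (ξ / 2) := by
    rw [show (ξ+1)/2 = ξ/2 + 1/2 by ring, ee_add, ee_half]; ring
  have h2 : ee (-(ξ + 1) / 2) = -ee (-ξ / 2) := by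
    have hm1 : ee (-1 : ℂ) = 1 := by
      rw [show (-1 : ℂ) = -(1:ℂ) by norm_num, ee_neg, ee_one]; norm_num
    rw [show -(ξ+1)/2 = -ξ/2 + 1/2 + (-1) by ring, ee_add, ee_add, ee_half, hm1]; ring
  have h3 : ee (ξ + 1) = ee ξ := by rw [ee_add, ee_one, mul_one]
  have hm1 : ee (-1 : ℂ) = 1 := by
    rw [show (-1 : ℂ) = -(1:ℂ) by norm_num, ee_neg, ee_one]; norm_num
  have h4 : ee (-(ξ + 1)) = ee (-ξ) := by
    rw [show -(ξ+1) = -ξ + -1 by ring, ee_add, hm1, mul_one]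
  simp only [h1, h2, h3, h4]
  ring

lemma scalar_id (ξ τ : ℂ) :
    (ee ((ξ+τ)/2) - ee (-(ξ+τ)/2)) * (1 - ee (-ξ))
      = -ee (-τ/2 - ξ) * (ee (ξ/2) - ee (-ξ/2)) * (1 - ee τ * ee ξ) := by
  have ha : ee ξ = ee (ξ/2) * ee (ξ/2) := ee_sq ξ
  have hb : ee τ = ee (τ/2) * ee (τ/2) := ee_sq τ
  have h1 : ee ((ξ+τ)/2) = ee (ξ/2) * ee (τ/2) := by rw [← ee_add]; congr 1; ring
  have h2 : ee (-(ξ+τ)/2) = (ee (ξ/2) * ee (τ/2))⁻¹ := by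
    rw [show -(ξ+τ)/2 = -((ξ+τ)/2) by ring, ee_neg, h1]
  have h3 : ee (-ξ) = (ee (ξ/2) * ee (ξ/2))⁻¹ := by rw [ee_neg, ha]
  have h4 : ee (-ξ/2) = (ee (ξ/2))⁻¹ := by rw [show -ξ/2 = -(ξ/2) by ring, ee_neg]
  have h5 : ee (-τ/2 - ξ) = (ee (τ/2) * (ee (ξ/2) * ee (ξ/2)))⁻¹ := by
    rw [show -τ/2 - ξ = -(τ/2 + ξ) by ring, ee_neg, ee_add, ha]
  rw [h1, h2, h3, h4, h5, ha, hb]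
  have hA := ee_ne (ξ/2); have hB := ee_ne (τ/2)
  field_simp
  ring

lemma theta_add_tau (ξ τ : ℂ) (hτ : 0 < τ.im) :
    theta (ξ + τ) τ = -ee (-τ/2 - ξ) * theta ξ τ := by
  have hq : ‖ee τ‖ < 1 := norm_ee_lt_one hτ
  set q := ee τ with hqdef
  set u := ee ξ with hudef
  set v := ee (-ξ) with hvdef
  have hterm : ∀ j : ℕ, (1 - q ^ (j+1) * ee (ξ+τ)) * (1 - q ^ (j+1) * ee (-(ξ+τ)))
      = (1 - q ^ (j+2) * u) * (1 - q ^ j * v) := by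
    intro j
    have h1 : ee (ξ + τ) = u * q := by rw [hudef, hqdef, ← ee_add]
    have h2 : ee (-(ξ+τ)) * q = v := by
      rw [hqdef, hvdef, ← ee_add]; congr 1; ring
    have h3 : q ^ (j+1) * ee (-(ξ+τ)) = q ^ j * v := by
      rw [← h2]; ring
    rw [h1, show (1:ℂ) - q^(j+1) * ee (-(ξ+τ)) = 1 - q^j * v by rw [← h3],
      show q^(j+1) * (u*q) = q^(j+2)*u by ring]
  have M2 : Multipliable (fun j : ℕ => 1 - q ^ (j+2) * u) := multipliable_shift hq u 2
  have M0 : Multipliable (fun j : ℕ => 1 - q ^ j * v) := by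
    simpa using multipliable_shift hq v 0
  have M1u : Multipliable (fun j : ℕ => 1 - q ^ (j+1) * u) := multipliable_shift hq u 1
  have M1v : Multipliable (fun j : ℕ => 1 - q ^ (j+1) * v) := multipliable_shift hq v 1
  have hP' : ∏' j : ℕ, ((1 - q ^ (j+1) * ee (ξ+τ)) * (1 - q ^ (j+1) * ee (-(ξ+τ))))
      = (∏' j : ℕ, (1 - q ^ (j+2) * u)) * ∏' j : ℕ, (1 - q ^ j * v) := by
    rw [tprod_congr hterm, M2.tprod_mul M0]
  have hT2 : ∏' j : ℕ, (1 - q ^ j * v) = (1 - v) * ∏' j : ℕ, (1 - q ^ (j+1) * v) := by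
    have h := tprod_eq_zero_mul' (f := fun j : ℕ => 1 - q ^ j * v) M1v
    simpa using h
  have hS1 : ∏' j : ℕ, (1 - q ^ (j+1) * u) = (1 - q * u) * ∏' j : ℕ, (1 - q ^ (j+2) * u) := by
    have h := tprod_eq_zero_mul' (f := fun j : ℕ => 1 - q ^ (j+1) * u) M2
    simpa [pow_one] using h
  have hP : ∏' j : ℕ, ((1 - q ^ (j+1) * u) * (1 - q ^ (j+1) * v))
      = (∏' j : ℕ, (1 - q ^ (j+1) * u)) * ∏' j : ℕ, (1 - q ^ (j+1) * v) := M1u.tprod_mul M1v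
  have key := scalar_id ξ τ
  unfold theta
  rw [hP', hT2, hP, hS1]
  linear_combination
    (ee (τ/12) * (∏' j : ℕ, (1 - q ^ (j+2) * u)) * (∏' j : ℕ, (1 - q ^ (j+1) * v))) * key

/-- `θ′`, the derivative of the theta function in the first variable. -/
noncomputable def thetaD (ξ τ : ℂ) : ℂ := deriv (fun z => theta z τ) ξ

/-- The Kronecker function `F(ξ,η,τ)`. -/
noncomputable def KF (ξ η τ : ℂ) : ℂ :=
  thetaD 0 τ * theta (ξ + η) τ / (theta ξ τ * theta η τ)

/-- For `ξ = s + rτ` write `r(ξ) = Im ξ / Im τ`.  The function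
`g(ξ) = e(α·r(ξ))·F(ξ,α,τ)` is invariant under translation by `ℤ + ℤτ`. -/
theorem stmt_9 (τ α : ℂ) (hτ : 0 < τ.im) (hα : theta α τ ≠ 0) :
    ∀ ξ : ℂ, theta ξ τ ≠ 0 → theta (ξ + 1) τ ≠ 0 → theta (ξ + τ) τ ≠ 0 →
      ee (α * (((ξ + 1).im / τ.im : ℝ) : ℂ)) * KF (ξ + 1) α τ =
        ee (α * ((ξ.im / τ.im : ℝ) : ℂ)) * KF ξ α τ ∧
      ee (α * (((ξ + τ).im / τ.im : ℝ) : ℂ)) * KF (ξ + τ) α τ =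
        ee (α * ((ξ.im / τ.im : ℝ) : ℂ)) * KF ξ α τ := by
  intro ξ h0 h1 ht
  have hne : τ.im ≠ 0 := ne_of_gt hτ
  constructor
  · have him : ((ξ + 1).im / τ.im : ℝ) = ξ.im / τ.im := by simp
    rw [him]
    congr 1
    rw [KF, KF, show ξ + 1 + α = (ξ + α) + 1 by ring, theta_add_one, theta_add_one,
      mul_neg, neg_mul, neg_div_neg_eq]
  · have h6 : ((ξ + τ).im / τ.im : ℝ) = ξ.im / τ.im + 1 := by
      rw [Complex.add_im]; field_simp
    have h7 : ee (α * (((ξ + τ).im / τ.im : ℝ) : ℂ)) =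
        ee (α * ((ξ.im / τ.im : ℝ) : ℂ)) * ee α := by
      rw [h6, ← ee_add]; congr 1; push_cast; ring
    have hsplit : ee (-τ/2 - (ξ + α)) = ee (-τ/2 - ξ) * (ee α)⁻¹ := by
      rw [← ee_neg α, ← ee_add]; congr 1; ring
    rw [h7, KF, KF, show ξ + τ + α = (ξ + α) + τ by ring, theta_add_tau _ _ hτ,
      theta_add_tau _ _ hτ, hsplit]
    field_simp [ee_ne, h0, hα]
end

section
/- Let 0 < q < 1 be real, r ≥ 1, n₁,…,n_r ≥ 1, and let f be a holomorphic branch of I_{n₁,…,n_r} on ℍ^r. Let t₁,…,t_r ∈ ℍ with q < |t₁| < |t₂| < ⋯ < |t_r| < 1 and t_i/t_j ∉ ℝ_{>0} for all i ≠ j, and let u₁,…,u_r ∈ ℂ with 1 < |u_i| < q^{−1} for all i. Then the family indexed by (m₁,…,m_r) ∈ ℤ^r with terms u₁^{m₁}⋯u_r^{m_r}·f(q^{m₁}·t₁, …, q^{m_r}·t_r) is absolutely summable (note that q^m·t ∈ ℍ for real q > 0, so all values are defined). -/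
open Complex Filter

/-- The multiple polylogarithm
`I_{n₁,…,n_r}(t₁,…,t_r) = ∑_{a₁,…,a_r ≥ 1} t₁^{a₁}⋯t_r^{a_r} /
  (a₁^{n₁}·(a₁+a₂)^{n₂}⋯(a₁+⋯+a_r)^{n_r})`. -/
noncomputable def mpl (r : ℕ) (nn : Fin r → ℕ) (t : Fin r → ℂ) : ℂ :=
  ∑' a : Fin r → ℕ,
    (∏ i, t i ^ (a i + 1)) / ∏ i, (∑ j ∈ Finset.Iic i, ((a j : ℂ) + 1)) ^ nn i

/-- The polydisc `ℍ^r` (each coordinate in the open upper half-plane). -/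
def UpperPoly (r : ℕ) : Set (Fin r → ℂ) := {t | ∀ i, 0 < (t i).im}

/-- A holomorphic branch of `I_{n₁,…,n_r}` on `ℍ^r`: holomorphic on `ℍ^r` and
agreeing with the defining series whenever all `|t_i| < 1`. -/
def IsMplBranch (r : ℕ) (nn : Fin r → ℕ) (f : (Fin r → ℂ) → ℂ) : Prop :=
  DifferentiableOn ℂ f (UpperPoly r) ∧
  ∀ t ∈ UpperPoly r, (∀ i, ‖t i‖ < 1) → f t = mpl r nn t

open MeasureTheory Set

namespace Stmt11

/-- weight `v^(n-1)` cut off to positive reals -/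
noncomputable def K1 (n : ℕ) (v : ℝ) : ℝ := Set.indicator (Set.Ioi 0) (fun w => w ^ (n-1)) v

lemma K1_nonneg (n : ℕ) (v : ℝ) : 0 ≤ K1 n v := by
  unfold K1
  by_cases h : v ∈ Set.Ioi (0:ℝ)
  · rw [Set.indicator_of_mem h]; have : (0:ℝ) < v := h; positivity
  · rw [Set.indicator_of_notMem h]

lemma K1_of_pos {n : ℕ} {v : ℝ} (h : 0 < v) : K1 n v = v ^ (n-1) :=
  Set.indicator_of_mem h _

lemma K1_of_nonpos {n : ℕ} {v : ℝ} (h : ¬ 0 < v) : K1 n v = 0 :=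
  Set.indicator_of_notMem h _

lemma K1_measurable (n : ℕ) : Measurable (K1 n) :=
  (measurable_id.pow_const _).indicator measurableSet_Ioi

/-- `y_j = x_j + ... + x_{r-1}` -/
def Yf (r : ℕ) (x : Fin r → ℝ) (j : Fin r) : ℝ := ∑ i ∈ Finset.Ici j, x i

lemma Yf_continuous (r : ℕ) (j : Fin r) : Continuous (fun x => Yf r x j) :=
  continuous_finset_sum _ fun i _ => continuous_apply i

lemma Yf_pos {r : ℕ} {x : Fin r → ℝ} (hx : ∀ i, 0 < x i) (j : Fin r) : 0 < Yf r x j :=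
  Finset.sum_pos (fun i _ => hx i) ⟨j, Finset.mem_Ici.2 le_rfl⟩

/-- swap of summation -/
lemma sum_mul_Yf {r : ℕ} (b : Fin r → ℝ) (x : Fin r → ℝ) :
    ∑ j, b j * Yf r x j = ∑ i, (∑ j ∈ Finset.Iic i, b j) * x i := by
  have e1 : ∀ j : Fin r, Finset.Ici j = Finset.univ.filter (fun i => j ≤ i) := by
    intro j; ext i; simp
  have e2 : ∀ i : Fin r, Finset.Iic i = Finset.univ.filter (fun j => j ≤ i) := by
    intro i; ext j; simp
  calc ∑ j, b j * Yf r x j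
      = ∑ j : Fin r, ∑ i : Fin r, if j ≤ i then b j * x i else 0 := by
        refine Finset.sum_congr rfl fun j _ => ?_
        rw [Yf, Finset.mul_sum, e1 j, Finset.sum_filter]
    _ = ∑ i : Fin r, ∑ j : Fin r, if j ≤ i then b j * x i else 0 := Finset.sum_comm
    _ = ∑ i, (∑ j ∈ Finset.Iic i, b j) * x i := by
        refine Finset.sum_congr rfl fun i _ => ?_
        rw [Finset.sum_mul, e2 i, Finset.sum_filter]

lemma prod_exp_Yf {r : ℕ} (b : Fin r → ℝ) (x : Fin r → ℝ) :
    ∏ j, Real.exp (-(b j * Yf r x j)) = ∏ i, Real.exp (-((∑ j ∈ Finset.Iic i, b j) * x i)) := by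
  rw [← Real.exp_sum, ← Real.exp_sum]
  congr 1
  rw [Finset.sum_neg_distrib, Finset.sum_neg_distrib, sum_mul_Yf]

lemma min_le_rpow {A θ : ℝ} (hA : 0 < A) (h0 : 0 ≤ θ) (h1 : θ ≤ 1) : min 1 A ≤ A ^ θ := by
  rcases le_total 1 A with h | h
  · calc min 1 A ≤ 1 := min_le_left _ _
      _ ≤ A ^ θ := Real.one_le_rpow h h0
  · calc min 1 A ≤ A := min_le_right _ _
      _ = A ^ (1:ℝ) := (Real.rpow_one A).symm
      _ ≤ A ^ θ := Real.rpow_le_rpow_of_exponent_ge hA h h1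

noncomputable def Ker (s : ℂ) (y : ℝ) : ℂ :=
  s * (Real.exp (-y) : ℂ) / (1 - s * (Real.exp (-y) : ℂ))

lemma norm_one_sub_ge {s : ℂ} (hs : 0 < s.im) {E : ℝ} (hE : 0 < E) :
    s.im * E ≤ ‖1 - s * (E:ℂ)‖ := by
  have h1 : (1 - s * (E:ℂ)).im = -(s.im * E) := by
    simp [Complex.sub_im, Complex.mul_im]
  calc s.im * E = |(1 - s * (E:ℂ)).im| := by rw [h1, abs_neg, abs_of_pos (by positivity)]
    _ ≤ ‖1 - s * (E:ℂ)‖ := Complex.abs_im_le_norm _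

lemma one_sub_ne_zero {s : ℂ} (hs : 0 < s.im) {E : ℝ} (hE : 0 < E) :
    1 - s * (E:ℂ) ≠ 0 := by
  intro h
  have := norm_one_sub_ge hs hE
  rw [h, norm_zero] at this
  nlinarith

lemma Ker_norm_le {s : ℂ} (hs : 0 < s.im) (y : ℝ) :
    ‖Ker s y‖ ≤ 2 * ‖s‖ / s.im * min 1 (‖s‖ * Real.exp (-y)) := by
  set E := Real.exp (-y) with hEdef
  have hE : 0 < E := Real.exp_pos _
  have hzn : ‖s * (E:ℂ)‖ = ‖s‖ * E := by
    rw [norm_mul, Complex.norm_real, Real.norm_of_nonneg hE.le]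
  have hb : s.im * E ≤ ‖1 - s * (E:ℂ)‖ := norm_one_sub_ge hs hE
  have hbpos : 0 < ‖1 - s * (E:ℂ)‖ := lt_of_lt_of_le (by positivity) hb
  have him : s.im ≤ ‖s‖ := by
    calc s.im ≤ |s.im| := le_abs_self _
      _ ≤ ‖s‖ := Complex.abs_im_le_norm _
  have hKer : ‖Ker s y‖ = ‖s‖ * E / ‖1 - s * (E:ℂ)‖ := by
    rw [Ker, norm_div, hzn]
  have hsn : 0 < ‖s‖ := lt_of_lt_of_le hs him
  rcases le_total (‖s‖ * E) (1/2) with h | h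
  · -- small case
    have hden : 1/2 ≤ ‖1 - s * (E:ℂ)‖ := by
      have := norm_sub_norm_le (1 : ℂ) (s * (E:ℂ))
      rw [norm_one, hzn] at this
      linarith
    have hmin : min 1 (‖s‖ * E) = ‖s‖ * E := min_eq_right (by linarith)
    rw [hKer, hmin]
    rw [div_le_iff₀ hbpos]
    have h2 : 2 * ‖s‖ / s.im * (‖s‖ * E) * (1/2) ≤ 2 * ‖s‖ / s.im * (‖s‖ * E) * ‖1 - s * (E:ℂ)‖ := by
      apply mul_le_mul_of_nonneg_left hden
      positivity
    have h3 : ‖s‖ * E ≤ 2 * ‖s‖ / s.im * (‖s‖ * E) * (1/2) := by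
      rw [div_mul_eq_mul_div, div_mul_eq_mul_div, le_div_iff₀ hs]
      nlinarith [mul_le_mul_of_nonneg_right him (mul_nonneg hsn.le hE.le)]
    linarith
  · -- large case
    have hmin : (1:ℝ)/2 ≤ min 1 (‖s‖ * E) := le_min (by norm_num) h
    rw [hKer]
    have hstep : ‖s‖ * E / ‖1 - s * (E:ℂ)‖ ≤ ‖s‖ / s.im := by
      rw [div_le_div_iff₀ hbpos hs]
      calc ‖s‖ * E * s.im = ‖s‖ * (s.im * E) := by ring
        _ ≤ ‖s‖ * ‖1 - s * (E:ℂ)‖ := by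
            apply mul_le_mul_of_nonneg_left hb hsn.le
    calc ‖s‖ * E / ‖1 - s * (E:ℂ)‖ ≤ ‖s‖ / s.im := hstep
      _ = 2 * ‖s‖ / s.im * (1/2) := by ring
      _ ≤ 2 * ‖s‖ / s.im * min 1 (‖s‖ * E) := by
          apply mul_le_mul_of_nonneg_left hmin
          positivity



lemma K1_mul_eq_indicator (n : ℕ) (g : ℝ → ℝ) (v : ℝ) :
    K1 n v * g v = Set.indicator (Set.Ioi 0) (fun w => w ^ (n-1) * g w) v := by
  by_cases h : v ∈ Set.Ioi (0:ℝ)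
  · rw [K1, Set.indicator_of_mem h, Set.indicator_of_mem h]
  · rw [K1, Set.indicator_of_notMem h, Set.indicator_of_notMem h, zero_mul]

lemma integrable_K1_exp {n : ℕ} (hn : 1 ≤ n) {c : ℝ} (hc : 0 < c) :
    Integrable (fun v => K1 n v * Real.exp (-(c * v))) := by
  have heq : (fun v => K1 n v * Real.exp (-(c * v)))
      = Set.indicator (Set.Ioi 0) (fun w => w ^ (n-1) * Real.exp (-(c * w))) := by
    funext v; exact K1_mul_eq_indicator n (fun w => Real.exp (-(c * w))) v
  rw [heq, integrable_indicator_iff measurableSet_Ioi]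
  have h := integrableOn_rpow_mul_exp_neg_mul_rpow
    (p := 1) (s := (n:ℝ) - 1) (b := c) (by
      have : (1:ℝ) ≤ (n:ℝ) := by exact_mod_cast hn
      linarith) one_pos hc
  have heq2 : (fun x : ℝ => x ^ ((n:ℝ) - 1) * Real.exp (-c * x ^ (1:ℝ)))
      = fun w => w ^ (n-1 : ℕ) * Real.exp (-(c * w)) := by
    funext w
    rw [Real.rpow_one, neg_mul]
    congr 1
    rw [show (n:ℝ) - 1 = ((n - 1 : ℕ) : ℝ) by
      rw [Nat.cast_sub hn]; norm_num]
    exact Real.rpow_natCast w (n-1)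
  rw [heq2] at h
  exact h

lemma integral_K1_exp {n : ℕ} (hn : 1 ≤ n) {c : ℝ} (hc : 0 < c) :
    ∫ v, K1 n v * Real.exp (-(c * v)) = (Nat.factorial (n-1) : ℝ) / c ^ n := by
  have heq : (fun v => K1 n v * Real.exp (-(c * v)))
      = Set.indicator (Set.Ioi 0) (fun w => w ^ (n-1) * Real.exp (-(c * w))) := by
    funext v; exact K1_mul_eq_indicator n (fun w => Real.exp (-(c * w))) v
  rw [heq, integral_indicator measurableSet_Ioi]
  have h := Real.integral_rpow_mul_exp_neg_mul_Ioi
    (a := (n:ℝ)) (r := c) (by positivity) hc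
  have heq2 : ∀ x ∈ Set.Ioi (0:ℝ), x ^ ((n:ℝ) - 1) * Real.exp (-(c * x))
      = x ^ (n-1 : ℕ) * Real.exp (-(c * x)) := by
    intro x _
    congr 1
    rw [show (n:ℝ) - 1 = ((n - 1 : ℕ) : ℝ) by rw [Nat.cast_sub hn]; norm_num]
    exact Real.rpow_natCast x (n-1)
  rw [setIntegral_congr_fun measurableSet_Ioi heq2] at h
  rw [h]
  have hg : Real.Gamma (n:ℝ) = (Nat.factorial (n-1) : ℝ) := by
    have := Real.Gamma_nat_eq_factorial (n-1)
    rw [show ((n-1 : ℕ) : ℝ) + 1 = (n:ℝ) by rw [Nat.cast_sub hn]; norm_num] at this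
    exact this
  rw [hg, show ((1:ℝ)/c) ^ (n:ℝ) = (1/c) ^ (n:ℕ) from Real.rpow_natCast _ n]
  rw [div_pow, one_pow]
  ring

/-- auxiliary: the unique function on `Fin 0 → β` -/
lemma subsingleton_pi0 {β : Type*} : Subsingleton (Fin 0 → β) :=
  ⟨fun a b => funext fun i => i.elim0⟩

lemma summable_pi_prod {β : Type*} : ∀ {n : ℕ} (f : Fin n → β → ℝ),
    (∀ i k, 0 ≤ f i k) → (∀ i, Summable (f i)) →
    Summable (fun a : Fin n → β => ∏ i, f i (a i)) := by
  intro n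
  induction n with
  | zero =>
    intro f _ _
    haveI := subsingleton_pi0 (β := β)
    have : HasSum (fun a : Fin 0 → β => ∏ i, f i (a i)) (∏ i : Fin 0, f i ((fun j => j.elim0) i)) := by
      apply hasSum_single (fun j : Fin 0 => j.elim0)
      intro b hb
      exact absurd (Subsingleton.elim b _) hb
    exact this.summable
  | succ n ih =>
    intro f h0 hf
    apply (Equiv.summable_iff (Fin.consEquiv (fun _ : Fin (n+1) => β))).mp
    have hcomp : ((fun a : Fin (n+1) → β => ∏ i, f i (a i)) ∘ (Fin.consEquiv (fun _ : Fin (n+1) => β)))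
        = fun p : β × (Fin n → β) => f 0 p.1 * ∏ i : Fin n, f i.succ (p.2 i) := by
      funext p
      simp only [Function.comp_apply, Fin.consEquiv_apply]
      rw [Fin.prod_univ_succ]
      simp
    rw [hcomp]
    exact Summable.mul_of_nonneg (f := f 0)
      (g := fun b : Fin n → β => ∏ i : Fin n, f i.succ (b i))
      (hf 0) (ih (fun i => f i.succ) (fun i k => h0 _ _) (fun i => hf _))
      (fun k => h0 0 k) (fun b => Finset.prod_nonneg fun i _ => h0 _ _)

lemma hasSum_pi_prod {β : Type*} : ∀ {n : ℕ} (f : Fin n → β → ℂ),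
    (∀ i, Summable (fun k => ‖f i k‖)) →
    HasSum (fun a : Fin n → β => ∏ i, f i (a i)) (∏ i, ∑' k, f i k) := by
  intro n
  induction n with
  | zero =>
    intro f _
    haveI := subsingleton_pi0 (β := β)
    have h1 : HasSum (fun a : Fin 0 → β => ∏ i, f i (a i)) (∏ i : Fin 0, f i ((fun j => j.elim0) i)) := by
      apply hasSum_single (fun j : Fin 0 => j.elim0)
      intro b hb
      exact absurd (Subsingleton.elim b _) hb
    simpa using h1
  | succ n ih =>
    intro f hf
    apply (Equiv.hasSum_iff (Fin.consEquiv (fun _ : Fin (n+1) => β))).mp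
    have hcomp : ((fun a : Fin (n+1) → β => ∏ i, f i (a i)) ∘ (Fin.consEquiv (fun _ : Fin (n+1) => β)))
        = fun p : β × (Fin n → β) => f 0 p.1 * ∏ i : Fin n, f i.succ (p.2 i) := by
      funext p
      simp only [Function.comp_apply, Fin.consEquiv_apply]
      rw [Fin.prod_univ_succ]
      simp
    rw [hcomp]
    have hnorm : Summable (fun b : Fin n → β => ‖∏ i : Fin n, f i.succ (b i)‖) := by
      have heq : (fun b : Fin n → β => ‖∏ i : Fin n, f i.succ (b i)‖)
          = fun b => ∏ i : Fin n, ‖f i.succ (b i)‖ := by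
        funext b; rw [norm_prod]
      rw [heq]
      exact summable_pi_prod (fun i => fun k => ‖f i.succ k‖)
        (fun i k => norm_nonneg _) (fun i => hf _)
    have hs : Summable (fun p : β × (Fin n → β) => f 0 p.1 * ∏ i : Fin n, f i.succ (p.2 i)) :=
      summable_mul_of_summable_norm (f := f 0)
        (g := fun b : Fin n → β => ∏ i : Fin n, f i.succ (b i)) (hf 0) hnorm
    have htsum : (∑' p : β × (Fin n → β), f 0 p.1 * ∏ i : Fin n, f i.succ (p.2 i))
        = (∑' k, f 0 k) * ∑' b : Fin n → β, ∏ i : Fin n, f i.succ (b i) :=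
      (tsum_mul_tsum_of_summable_norm (f := f 0)
        (g := fun b : Fin n → β => ∏ i : Fin n, f i.succ (b i)) (hf 0) hnorm).symm
    have hval : (∑' k, f 0 k) * (∑' b : Fin n → β, ∏ i : Fin n, f i.succ (b i))
        = ∏ i : Fin (n+1), ∑' k, f i k := by
      rw [(ih (fun i => f i.succ) (fun i => hf _)).tsum_eq, Fin.prod_univ_succ]
    rw [← hval, ← htsum]
    exact hs.hasSum


/-! ## The integrand -/

noncomputable def Gint (r : ℕ) (nn : Fin r → ℕ) (t : Fin r → ℂ) (x : Fin r → ℝ) : ℂ :=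
  ((∏ i, K1 (nn i) (x i) : ℝ) : ℂ) * ∏ j, Ker (t j) (Yf r x j)

lemma Ker_continuous {s : ℂ} (hs : 0 < s.im) : Continuous (fun y : ℝ => Ker s y) := by
  apply Continuous.div
  · exact continuous_const.mul (Complex.continuous_ofReal.comp (Real.continuous_exp.comp continuous_neg))
  · exact continuous_const.sub (continuous_const.mul
      (Complex.continuous_ofReal.comp (Real.continuous_exp.comp continuous_neg)))
  · intro y
    exact one_sub_ne_zero hs (Real.exp_pos (-y))

lemma Gint_measurable (r : ℕ) (nn : Fin r → ℕ) (t : Fin r → ℂ) (ht : ∀ j, 0 < (t j).im) :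
    Measurable (Gint r nn t) := by
  apply Measurable.mul
  · apply Complex.measurable_ofReal.comp
    apply Finset.measurable_prod
    intro i _
    exact (K1_measurable (nn i)).comp (measurable_pi_apply i)
  · apply Finset.measurable_prod
    intro j _
    exact ((Ker_continuous (ht j)).comp (Yf_continuous r j)).measurable

/-- the dominating product function -/
noncomputable def Dom (r : ℕ) (nn : Fin r → ℕ) (c : Fin r → ℝ) (x : Fin r → ℝ) : ℝ :=
  ∏ i, (K1 (nn i) (x i) * Real.exp (-(c i * x i)))

lemma Dom_nonneg (r nn c x) : 0 ≤ Dom r nn c x :=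
  Finset.prod_nonneg fun i _ => mul_nonneg (K1_nonneg _ _) (Real.exp_pos _).le

lemma Dom_integrable (r : ℕ) (nn : Fin r → ℕ) (hnn : ∀ i, 1 ≤ nn i)
    (c : Fin r → ℝ) (hc : ∀ i, 0 < c i) : Integrable (Dom r nn c) := by
  unfold Dom
  exact MeasureTheory.Integrable.fintype_prod (f := fun i v => K1 (nn i) v * Real.exp (-(c i * v)))
    (fun i => integrable_K1_exp (hnn i) (hc i))

lemma Dom_integral (r : ℕ) (nn : Fin r → ℕ) (hnn : ∀ i, 1 ≤ nn i)
    (c : Fin r → ℝ) (hc : ∀ i, 0 < c i) :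
    ∫ x, Dom r nn c x = ∏ i, ((Nat.factorial (nn i - 1) : ℝ) / (c i) ^ (nn i)) := by
  unfold Dom
  rw [MeasureTheory.integral_fintype_prod_volume_eq_prod (ι := Fin r)
    (f := fun i v => K1 (nn i) v * Real.exp (-(c i * v)))]
  exact Finset.prod_congr rfl fun i _ => integral_K1_exp (hnn i) (hc i)

/-- the sum `c i = ∑_{j ≤ i} θ j` -/
noncomputable def cSum (r : ℕ) (θ : Fin r → ℝ) (i : Fin r) : ℝ := ∑ j ∈ Finset.Iic i, θ j

lemma cSum_pos {r : ℕ} {θ : Fin r → ℝ} (hθ : ∀ j, 0 < θ j) (i : Fin r) : 0 < cSum r θ i :=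
  Finset.sum_pos (fun j _ => hθ j) ⟨i, Finset.mem_Iic.2 le_rfl⟩

/-- Main pointwise domination of the integrand. -/
lemma Gint_norm_le (r : ℕ) (nn : Fin r → ℕ) (t : Fin r → ℂ) (ht : ∀ j, 0 < (t j).im)
    (θ : Fin r → ℝ) (hθ0 : ∀ j, 0 < θ j) (hθ1 : ∀ j, θ j ≤ 1) (x : Fin r → ℝ) :
    ‖Gint r nn t x‖ ≤ (∏ j, (2 * ‖t j‖ / (t j).im * ‖t j‖ ^ (θ j))) * Dom r nn (cSum r θ) x := by
  have htn : ∀ j, 0 < ‖t j‖ := fun j =>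
    lt_of_lt_of_le (ht j) ((le_abs_self _).trans (Complex.abs_im_le_norm _))
  have h1 : ‖Gint r nn t x‖ = (∏ i, K1 (nn i) (x i)) * ∏ j, ‖Ker (t j) (Yf r x j)‖ := by
    rw [Gint, norm_mul, Complex.norm_real, Real.norm_of_nonneg
      (Finset.prod_nonneg fun i _ => K1_nonneg _ _), norm_prod]
  rw [h1]
  have h2 : ∏ j, ‖Ker (t j) (Yf r x j)‖
      ≤ ∏ j, (2 * ‖t j‖ / (t j).im * (‖t j‖ ^ (θ j) * Real.exp (-(θ j * Yf r x j)))) := by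
    apply Finset.prod_le_prod (fun j _ => norm_nonneg _)
    intro j _
    calc ‖Ker (t j) (Yf r x j)‖
        ≤ 2 * ‖t j‖ / (t j).im * min 1 (‖t j‖ * Real.exp (-(Yf r x j))) :=
          Ker_norm_le (ht j) _
      _ ≤ 2 * ‖t j‖ / (t j).im * (‖t j‖ ^ (θ j) * Real.exp (-(θ j * Yf r x j))) := by
          apply mul_le_mul_of_nonneg_left _ (by have h1 := ht j; have h2 := htn j; positivity)
          calc min 1 (‖t j‖ * Real.exp (-(Yf r x j)))
              ≤ (‖t j‖ * Real.exp (-(Yf r x j))) ^ (θ j) :=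
                min_le_rpow (by have := htn j; positivity) (hθ0 j).le (hθ1 j)
            _ = ‖t j‖ ^ (θ j) * Real.exp (-(θ j * Yf r x j)) := by
                rw [Real.mul_rpow (htn j).le (Real.exp_pos _).le]
                congr 1
                rw [← Real.exp_log (Real.exp_pos (-(Yf r x j))), Real.log_exp,
                  ← Real.exp_mul]
                congr 1
                ring
  have h3 : ∏ j, (2 * ‖t j‖ / (t j).im * (‖t j‖ ^ (θ j) * Real.exp (-(θ j * Yf r x j))))
      = (∏ j, (2 * ‖t j‖ / (t j).im * ‖t j‖ ^ (θ j))) * ∏ j, Real.exp (-(θ j * Yf r x j)) := by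
    rw [← Finset.prod_mul_distrib]
    exact Finset.prod_congr rfl fun j _ => by ring
  have h4 : ∏ j, Real.exp (-(θ j * Yf r x j)) = ∏ i, Real.exp (-(cSum r θ i * x i)) :=
    prod_exp_Yf θ x
  calc (∏ i, K1 (nn i) (x i)) * ∏ j, ‖Ker (t j) (Yf r x j)‖
      ≤ (∏ i, K1 (nn i) (x i)) *
        ((∏ j, (2 * ‖t j‖ / (t j).im * ‖t j‖ ^ (θ j))) * ∏ i, Real.exp (-(cSum r θ i * x i))) := by
        apply mul_le_mul_of_nonneg_left _ (Finset.prod_nonneg fun i _ => K1_nonneg _ _)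
        rw [← h4, ← h3]
        exact h2
    _ = (∏ j, (2 * ‖t j‖ / (t j).im * ‖t j‖ ^ (θ j))) * Dom r nn (cSum r θ) x := by
        have h5 : Dom r nn (cSum r θ) x
            = (∏ i, K1 (nn i) (x i)) * ∏ i, Real.exp (-(cSum r θ i * x i)) := by
          rw [Dom]; exact Finset.prod_mul_distrib
        rw [h5]; ring

lemma Gint_integrable (r : ℕ) (nn : Fin r → ℕ) (hnn : ∀ i, 1 ≤ nn i)
    (t : Fin r → ℂ) (ht : ∀ j, 0 < (t j).im) : Integrable (Gint r nn t) := by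
  have hbd := Gint_norm_le r nn t ht (fun _ => 1) (fun _ => one_pos) (fun _ => le_rfl)
  set C := ∏ j, (2 * ‖t j‖ / (t j).im * ‖t j‖ ^ ((1:ℝ)))
  apply Integrable.mono' ((Dom_integrable r nn hnn _ (cSum_pos (fun _ => one_pos))).const_mul C)
    ((Gint_measurable r nn t ht).aestronglyMeasurable)
  exact Filter.Eventually.of_forall hbd

lemma norm_integral_Gint_le (r : ℕ) (nn : Fin r → ℕ) (hnn : ∀ i, 1 ≤ nn i)
    (t : Fin r → ℂ) (ht : ∀ j, 0 < (t j).im)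
    (θ : Fin r → ℝ) (hθ0 : ∀ j, 0 < θ j) (hθ1 : ∀ j, θ j ≤ 1) :
    ‖∫ x, Gint r nn t x‖ ≤ (∏ j, (2 * ‖t j‖ / (t j).im * ‖t j‖ ^ (θ j))) *
      ∏ i, ((Nat.factorial (nn i - 1) : ℝ) / (cSum r θ i) ^ (nn i)) := by
  have hcpos := cSum_pos hθ0
  calc ‖∫ x, Gint r nn t x‖ ≤ ∫ x, ‖Gint r nn t x‖ := norm_integral_le_integral_norm _
    _ ≤ ∫ x, (∏ j, (2 * ‖t j‖ / (t j).im * ‖t j‖ ^ (θ j))) * Dom r nn (cSum r θ) x := by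
        apply integral_mono ((Gint_integrable r nn hnn t ht).norm)
          ((Dom_integrable r nn hnn _ hcpos).const_mul _)
        exact Gint_norm_le r nn t ht θ hθ0 hθ1
    _ = (∏ j, (2 * ‖t j‖ / (t j).im * ‖t j‖ ^ (θ j))) *
      ∏ i, ((Nat.factorial (nn i - 1) : ℝ) / (cSum r θ i) ^ (nn i)) := by
        rw [MeasureTheory.integral_const_mul, Dom_integral r nn hnn _ hcpos]

/-! ## The term functions and the polydisc identity -/

noncomputable def Fa (r : ℕ) (nn : Fin r → ℕ) (t : Fin r → ℂ) (a : Fin r → ℕ)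
    (x : Fin r → ℝ) : ℂ :=
  ((∏ i, K1 (nn i) (x i) : ℝ) : ℂ) * ∏ j, (t j * (Real.exp (-(Yf r x j)) : ℂ)) ^ (a j + 1)

def ka (r : ℕ) (a : Fin r → ℕ) (i : Fin r) : ℕ := ∑ j ∈ Finset.Iic i, (a j + 1)

lemma ka_pos (r : ℕ) (a : Fin r → ℕ) (i : Fin r) : 0 < ka r a i :=
  Finset.sum_pos (fun j _ => Nat.succ_pos _) ⟨i, Finset.mem_Iic.2 le_rfl⟩

lemma prod_exp_pow (r : ℕ) (a : Fin r → ℕ) (x : Fin r → ℝ) :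
    ∏ j, Real.exp (-(Yf r x j)) ^ (a j + 1) = ∏ i, Real.exp (-((ka r a i : ℝ) * x i)) := by
  have h1 : ∀ j : Fin r, Real.exp (-(Yf r x j)) ^ (a j + 1)
      = Real.exp (-((((a j : ℝ)) + 1) * Yf r x j)) := by
    intro j
    rw [← Real.exp_nat_mul]
    congr 1
    push_cast
    ring
  rw [Finset.prod_congr rfl (fun j _ => h1 j), prod_exp_Yf (fun j => ((a j : ℝ)) + 1) x]
  refine Finset.prod_congr rfl fun i _ => ?_
  congr 2
  rw [ka]
  push_cast
  rfl

lemma Fa_eq (r : ℕ) (nn : Fin r → ℕ) (t : Fin r → ℂ) (a : Fin r → ℕ) (x : Fin r → ℝ) :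
    Fa r nn t a x = (∏ j, t j ^ (a j + 1)) *
      ∏ i, (((K1 (nn i) (x i) * Real.exp (-((ka r a i : ℝ) * x i)) : ℝ)) : ℂ) := by
  rw [Fa]
  have h1 : ∏ j, (t j * (Real.exp (-(Yf r x j)) : ℂ)) ^ (a j + 1)
      = (∏ j, t j ^ (a j + 1)) * ((∏ j, Real.exp (-(Yf r x j)) ^ (a j + 1) : ℝ) : ℂ) := by
    push_cast
    rw [← Finset.prod_mul_distrib]
    exact Finset.prod_congr rfl fun j _ => by rw [mul_pow]
  rw [h1, prod_exp_pow r a x]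
  have h2 : (∏ i, (((K1 (nn i) (x i) * Real.exp (-((ka r a i : ℝ) * x i)) : ℝ)) : ℂ))
      = (∏ i, ((K1 (nn i) (x i) : ℝ) : ℂ)) *
        ∏ i, ((Real.exp (-((ka r a i : ℝ) * x i)) : ℝ) : ℂ) := by
    rw [← Finset.prod_mul_distrib]
    exact Finset.prod_congr rfl fun i _ => by push_cast; ring
  rw [h2, Complex.ofReal_prod, Complex.ofReal_prod]
  ring

lemma Fa_integrable (r : ℕ) (nn : Fin r → ℕ) (hnn : ∀ i, 1 ≤ nn i)
    (t : Fin r → ℂ) (a : Fin r → ℕ) : Integrable (Fa r nn t a) := by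
  have heq : Fa r nn t a = fun x => (∏ j, t j ^ (a j + 1)) *
      ∏ i, (((K1 (nn i) (x i) * Real.exp (-((ka r a i : ℝ) * x i)) : ℝ)) : ℂ) := by
    funext x; exact Fa_eq r nn t a x
  rw [heq]
  apply Integrable.const_mul
  exact MeasureTheory.Integrable.fintype_prod
    (f := fun i v => (((K1 (nn i) v * Real.exp (-((ka r a i : ℝ) * v)) : ℝ)) : ℂ))
    (fun i => (integrable_K1_exp (hnn i) (by exact_mod_cast ka_pos r a i)).ofReal)

lemma Fa_integral (r : ℕ) (nn : Fin r → ℕ) (hnn : ∀ i, 1 ≤ nn i)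
    (t : Fin r → ℂ) (a : Fin r → ℕ) :
    ∫ x, Fa r nn t a x = (∏ j, t j ^ (a j + 1)) *
      ∏ i, (((Nat.factorial (nn i - 1) : ℝ) / (ka r a i : ℝ) ^ (nn i) : ℝ) : ℂ) := by
  have heq : Fa r nn t a = fun x => (∏ j, t j ^ (a j + 1)) *
      ∏ i, (((K1 (nn i) (x i) * Real.exp (-((ka r a i : ℝ) * x i)) : ℝ)) : ℂ) := by
    funext x; exact Fa_eq r nn t a x
  rw [heq, MeasureTheory.integral_const_mul,
    MeasureTheory.integral_fintype_prod_volume_eq_prod (ι := Fin r)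
      (f := fun i v => (((K1 (nn i) v * Real.exp (-((ka r a i : ℝ) * v)) : ℝ)) : ℂ))]
  congr 1
  refine Finset.prod_congr rfl fun i _ => ?_
  rw [show (∫ (v:ℝ), ((K1 (nn i) v * Real.exp (-((ka r a i : ℝ) * v)) : ℝ) : ℂ))
      = (((∫ v, K1 (nn i) v * Real.exp (-((ka r a i : ℝ) * v)) : ℝ)) : ℂ) from integral_ofReal,
    integral_K1_exp (hnn i) (by exact_mod_cast ka_pos r a i)]

lemma Fa_norm (r : ℕ) (nn : Fin r → ℕ) (t : Fin r → ℂ) (a : Fin r → ℕ) (x : Fin r → ℝ) :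
    ‖Fa r nn t a x‖ = (∏ j, ‖t j‖ ^ (a j + 1)) *
      ∏ i, (K1 (nn i) (x i) * Real.exp (-((ka r a i : ℝ) * x i))) := by
  rw [Fa_eq, norm_mul, norm_prod]
  congr 1
  · exact Finset.prod_congr rfl fun j _ => norm_pow _ _
  · rw [norm_prod]
    refine (Finset.prod_congr rfl fun i _ => ?_).trans rfl
    rw [Complex.norm_real, Real.norm_of_nonneg
      (mul_nonneg (K1_nonneg _ _) (Real.exp_pos _).le)]

lemma Fa_norm_integral (r : ℕ) (nn : Fin r → ℕ) (hnn : ∀ i, 1 ≤ nn i)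
    (t : Fin r → ℂ) (a : Fin r → ℕ) :
    ∫ x, ‖Fa r nn t a x‖ = (∏ j, ‖t j‖ ^ (a j + 1)) *
      ∏ i, ((Nat.factorial (nn i - 1) : ℝ) / (ka r a i : ℝ) ^ (nn i)) := by
  have heq : (fun x => ‖Fa r nn t a x‖) = fun x => (∏ j, ‖t j‖ ^ (a j + 1)) *
      ∏ i, (K1 (nn i) (x i) * Real.exp (-((ka r a i : ℝ) * x i))) := by
    funext x; exact Fa_norm r nn t a x
  rw [heq, MeasureTheory.integral_const_mul,
    MeasureTheory.integral_fintype_prod_volume_eq_prod (ι := Fin r)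
      (f := fun i v => K1 (nn i) v * Real.exp (-((ka r a i : ℝ) * v)))]
  congr 1
  exact Finset.prod_congr rfl fun i _ =>
    integral_K1_exp (hnn i) (by exact_mod_cast ka_pos r a i)

/-! ## The function G and the identity G = mpl on the polydisc -/

noncomputable def G (r : ℕ) (nn : Fin r → ℕ) (t : Fin r → ℂ) : ℂ :=
  ((∏ i, (Nat.factorial (nn i - 1) : ℂ)))⁻¹ * ∫ x, Gint r nn t x

/-- pointwise identity: the sum of the `Fa` equals the integrand -/
lemma tsum_Fa (r : ℕ) (nn : Fin r → ℕ) (t : Fin r → ℂ) (ht : ∀ j, 0 < (t j).im)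
    (ht1 : ∀ j, ‖t j‖ < 1) (x : Fin r → ℝ) :
    ∑' a : Fin r → ℕ, Fa r nn t a x = Gint r nn t x := by
  have hC : ∀ a : Fin r → ℕ, Fa r nn t a x = ((∏ i, K1 (nn i) (x i) : ℝ) : ℂ) *
      ∏ j, (t j * (Real.exp (-(Yf r x j)) : ℂ)) ^ (a j + 1) := fun a => rfl
  rw [tsum_congr hC, tsum_mul_left]
  by_cases hx : ∀ i, 0 < x i
  · -- all coordinates positive
    have hz : ∀ j, ‖t j * (Real.exp (-(Yf r x j)) : ℂ)‖ < 1 := by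
      intro j
      rw [norm_mul, Complex.norm_real, Real.norm_of_nonneg (Real.exp_pos _).le]
      have h1 : Real.exp (-(Yf r x j)) < 1 := by
        rw [Real.exp_lt_one_iff]
        exact neg_lt_zero.2 (Yf_pos hx j)
      calc ‖t j‖ * Real.exp (-(Yf r x j)) ≤ 1 * Real.exp (-(Yf r x j)) := by
            apply mul_le_mul_of_nonneg_right (ht1 j).le (Real.exp_pos _).le
        _ < 1 := by rw [one_mul]; exact h1
    have hs := hasSum_pi_prod (fun j => fun k : ℕ => (t j * (Real.exp (-(Yf r x j)) : ℂ)) ^ (k+1))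
      (fun j => by
        have h2 : Summable (fun k : ℕ => ‖t j * (Real.exp (-(Yf r x j)) : ℂ)‖ ^ (k+1)) := by
          apply Summable.congr ((summable_geometric_of_lt_one (norm_nonneg _)
            (hz j)).mul_left ‖t j * (Real.exp (-(Yf r x j)) : ℂ)‖)
          intro k; rw [pow_succ]; ring
        exact h2.congr (fun k => (norm_pow _ _).symm))
    rw [hs.tsum_eq]
    rw [Gint]
    congr 1
    refine Finset.prod_congr rfl fun j _ => ?_
    have hgeo : ∑' k : ℕ, (t j * (Real.exp (-(Yf r x j)) : ℂ)) ^ (k+1)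
        = (t j * (Real.exp (-(Yf r x j)) : ℂ)) * (1 - t j * (Real.exp (-(Yf r x j)) : ℂ))⁻¹ := by
      have h4 : ∀ k : ℕ, (t j * (Real.exp (-(Yf r x j)) : ℂ)) ^ (k+1)
          = (t j * (Real.exp (-(Yf r x j)) : ℂ)) * (t j * (Real.exp (-(Yf r x j)) : ℂ)) ^ k := by
        intro k; rw [pow_succ, mul_comm]
      rw [tsum_congr h4, tsum_mul_left, tsum_geometric_of_norm_lt_one (hz j)]
    rw [hgeo, Ker, div_eq_mul_inv]
  · -- some coordinate nonpositive : both sides vanish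
    push_neg at hx
    obtain ⟨i, hi⟩ := hx
    have hK : K1 (nn i) (x i) = 0 := K1_of_nonpos (not_lt.2 hi)
    have hprod : (∏ i, K1 (nn i) (x i)) = 0 :=
      Finset.prod_eq_zero (Finset.mem_univ i) hK
    rw [Gint, hprod]
    simp

lemma summable_Fa_norm_integral (r : ℕ) (nn : Fin r → ℕ) (hnn : ∀ i, 1 ≤ nn i)
    (t : Fin r → ℂ) (ht1 : ∀ j, ‖t j‖ < 1) :
    Summable (fun a : Fin r → ℕ => ∫ x, ‖Fa r nn t a x‖) := by
  have hb : Summable (fun a : Fin r → ℕ =>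
      (∏ i, (Nat.factorial (nn i - 1) : ℝ)) * ∏ j, ‖t j‖ ^ (a j + 1)) := by
    apply Summable.mul_left
    apply summable_pi_prod (fun j => fun k : ℕ => ‖t j‖ ^ (k+1))
      (fun j k => by positivity)
    intro j
    have h2 : Summable (fun k : ℕ => ‖t j‖ ^ k) :=
      summable_geometric_of_lt_one (norm_nonneg _) (ht1 j)
    exact (h2.mul_left ‖t j‖).congr (fun k => by rw [pow_succ]; ring)
  apply Summable.of_nonneg_of_le
    (fun a => integral_nonneg fun x => norm_nonneg _) _ hb
  intro a
  rw [Fa_norm_integral r nn hnn t a]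
  rw [mul_comm (∏ i, (Nat.factorial (nn i - 1) : ℝ))]
  apply mul_le_mul_of_nonneg_left _ (Finset.prod_nonneg fun j _ => by positivity)
  apply Finset.prod_le_prod
  · intro i _; positivity
  · intro i _
    have hka : (1:ℝ) ≤ (ka r a i : ℝ) ^ (nn i) := by
      have h1 : (1:ℝ) ≤ (ka r a i : ℝ) := by exact_mod_cast ka_pos r a i
      exact one_le_pow₀ h1
    calc (Nat.factorial (nn i - 1) : ℝ) / (ka r a i : ℝ) ^ (nn i)
        ≤ (Nat.factorial (nn i - 1) : ℝ) / 1 := by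
          apply div_le_div_of_nonneg_left (by positivity) one_pos hka
      _ = (Nat.factorial (nn i - 1) : ℝ) := div_one _

lemma G_eq_mpl (r : ℕ) (nn : Fin r → ℕ) (hnn : ∀ i, 1 ≤ nn i)
    (t : Fin r → ℂ) (ht : ∀ j, 0 < (t j).im) (ht1 : ∀ j, ‖t j‖ < 1) :
    G r nn t = mpl r nn t := by
  have h0 := MeasureTheory.integral_tsum_of_summable_integral_norm
    (fun a => Fa_integrable r nn hnn t a) (summable_Fa_norm_integral r nn hnn t ht1)
  have hint : ∫ x, Gint r nn t x = ∑' a : Fin r → ℕ, ∫ x, Fa r nn t a x := by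
    rw [h0]
    refine integral_congr_ae (Eventually.of_forall fun x => ?_)
    exact (tsum_Fa r nn t ht ht1 x).symm
  have hterm : ∀ a : Fin r → ℕ, ∫ x, Fa r nn t a x
      = (∏ i, (Nat.factorial (nn i - 1) : ℂ)) *
        ((∏ i, t i ^ (a i + 1)) / ∏ i, (∑ j ∈ Finset.Iic i, ((a j : ℂ) + 1)) ^ nn i) := by
    intro a
    rw [Fa_integral r nn hnn t a]
    have hden : ∀ i : Fin r, (∑ j ∈ Finset.Iic i, ((a j : ℂ) + 1)) = ((ka r a i : ℕ) : ℂ) := by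
      intro i; rw [ka]; push_cast; rfl
    have hprod : ∏ i, (((Nat.factorial (nn i - 1) : ℝ) / (ka r a i : ℝ) ^ (nn i) : ℝ) : ℂ)
        = (∏ i, (Nat.factorial (nn i - 1) : ℂ)) / ∏ i, ((ka r a i : ℕ) : ℂ) ^ (nn i) := by
      rw [← Finset.prod_div_distrib]
      refine Finset.prod_congr rfl fun i _ => ?_
      push_cast
      rfl
    rw [hprod]
    have hden2 : ∏ i, (∑ j ∈ Finset.Iic i, ((a j : ℂ) + 1)) ^ nn i
        = ∏ i, ((ka r a i : ℕ) : ℂ) ^ (nn i) :=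
      Finset.prod_congr rfl fun i _ => by rw [hden i]
    rw [hden2]
    ring
  rw [G, hint, tsum_congr hterm, tsum_mul_left, ← mul_assoc, mpl]
  have hne : (∏ i, (Nat.factorial (nn i - 1) : ℂ)) ≠ 0 := by
    apply Finset.prod_ne_zero_iff.2
    intro i _
    exact_mod_cast Nat.cast_ne_zero.2 (Nat.factorial_ne_zero _)
  rw [inv_mul_cancel₀ hne, one_mul]

/-! ## Holomorphy of G in each variable -/

lemma Ker_hasDerivAt {E : ℝ} (hE : 0 < E) {z : ℂ} (hz : 1 - z * (E:ℂ) ≠ 0) :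
    HasDerivAt (fun w : ℂ => w * (E:ℂ) / (1 - w * (E:ℂ)))
      ((E:ℂ) / (1 - z * (E:ℂ))^2) z := by
  have h1 : HasDerivAt (fun w : ℂ => w * (E:ℂ)) (E:ℂ) z := by
    simpa using (hasDerivAt_id z).mul_const (E:ℂ)
  have h2 : HasDerivAt (fun w : ℂ => 1 - w * (E:ℂ)) (-(E:ℂ)) z := by
    have h := (hasDerivAt_const z (1:ℂ)).sub h1; rw [zero_sub] at h; exact h
  have h3 := h1.div h2 hz
  refine h3.congr_deriv ?_
  congr 1
  ring

lemma G_slice_differentiableOn (r : ℕ) (nn : Fin r → ℕ) (hnn : ∀ i, 1 ≤ nn i)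
    (s : Fin r → ℂ) (hs : ∀ j, 0 < (s j).im) (i : Fin r) :
    DifferentiableOn ℂ (fun z => G r nn (Function.update s i z)) {z : ℂ | 0 < z.im} := by
  intro z₀ hz₀
  apply DifferentiableAt.differentiableWithinAt
  have hz0 : 0 < z₀.im := hz₀
  apply DifferentiableAt.const_mul
  -- constants
  set ε := z₀.im / 2 with hεdef
  have hεpos : 0 < ε := by positivity
  set R := ‖z₀‖ + ε with hRdef
  have hR : 0 < R := by positivity
  set δ := min (1/2 : ℝ) (z₀.im / (4 * R)) with hδdef
  have hδ : 0 < δ := lt_min (by norm_num) (by positivity)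
  -- facts on the ball
  have hball : ∀ z ∈ Metric.ball z₀ ε, 0 < z.im ∧ ∀ E : ℝ, 0 < E → δ ≤ ‖1 - z * (E:ℂ)‖ := by
    intro z hz
    have hd : ‖z - z₀‖ < ε := by rwa [Metric.mem_ball, dist_eq_norm] at hz
    have him : z₀.im / 2 ≤ z.im := by
      have h1 : |(z - z₀).im| ≤ ‖z - z₀‖ := Complex.abs_im_le_norm _
      have h2 : (z - z₀).im = z.im - z₀.im := by simp [Complex.sub_im]
      rw [h2] at h1
      have h3 := abs_le.1 (le_of_lt (lt_of_le_of_lt h1 hd))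
      have h4 := h3.1
      have hε2 : ε = z₀.im / 2 := hεdef
      linarith
    have hzim : 0 < z.im := by linarith
    refine ⟨hzim, ?_⟩
    intro E hE
    rcases le_or_gt (‖z * (E:ℂ)‖) (1/2) with hsm | hlg
    · have h5 := norm_sub_norm_le (1:ℂ) (z*(E:ℂ))
      rw [norm_one] at h5
      calc δ ≤ 1/2 := min_le_left _ _
        _ ≤ ‖1 - z*(E:ℂ)‖ := by linarith
    · have hzn : ‖z‖ < R := by
        calc ‖z‖ = ‖z₀ + (z - z₀)‖ := by ring_nf
          _ ≤ ‖z₀‖ + ‖z - z₀‖ := norm_add_le _ _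
          _ < R := by rw [hRdef]; linarith
      have hnormzE : ‖z * (E:ℂ)‖ = ‖z‖ * E := by
        rw [norm_mul, Complex.norm_real, Real.norm_of_nonneg hE.le]
      have hzpos : 0 < ‖z‖ := by
        calc (0:ℝ) < z.im := hzim
          _ ≤ |z.im| := le_abs_self _
          _ ≤ ‖z‖ := Complex.abs_im_le_norm _
      have hEgt : 1 < E * (2 * R) := by
        rw [hnormzE] at hlg
        nlinarith [mul_lt_mul_of_pos_right hzn hE]
      have hlow := norm_one_sub_ge hzim hE
      calc δ ≤ z₀.im / (4 * R) := min_le_right _ _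
        _ ≤ z.im * E := by
            rw [div_le_iff₀ (by positivity)]
            nlinarith [mul_lt_mul_of_pos_left hEgt hzim]
        _ ≤ ‖1 - z * (E:ℂ)‖ := hlow
  -- representation
  have hrepr : ∀ (z : ℂ) (x : Fin r → ℝ), Gint r nn (Function.update s i z) x
      = ((∏ l, K1 (nn l) (x l) : ℝ) : ℂ) *
        ((fun w : ℂ => w * ((Real.exp (-(Yf r x i)) : ℝ) : ℂ) /
            (1 - w * ((Real.exp (-(Yf r x i)) : ℝ) : ℂ))) z *
          ∏ j ∈ Finset.univ.erase i, Ker (s j) (Yf r x j)) := by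
    intro z x
    rw [Gint]
    congr 1
    rw [← Finset.mul_prod_erase Finset.univ _ (Finset.mem_univ i), Function.update_self]
    congr 1
    exact Finset.prod_congr rfl fun j hj => by
      rw [Function.update_of_ne (Finset.mem_erase.1 hj).1]
  -- the derivative candidate
  set F' : ℂ → (Fin r → ℝ) → ℂ := fun z x =>
    ((∏ l, K1 (nn l) (x l) : ℝ) : ℂ) *
      (((Real.exp (-(Yf r x i)) : ℝ) : ℂ) / (1 - z * ((Real.exp (-(Yf r x i)) : ℝ) : ℂ))^2 *
        ∏ j ∈ Finset.univ.erase i, Ker (s j) (Yf r x j)) with hF'def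
  -- the bound
  set bound : (Fin r → ℝ) → ℝ := fun x =>
    (δ⁻¹^2 * ∏ j ∈ Finset.univ.erase i, (2 * ‖s j‖ / (s j).im * max 1 ‖s j‖)) *
      Dom r nn (cSum r (fun _ => (1:ℝ)/2)) x with hbdef
  have hconst_nonneg : 0 ≤ δ⁻¹^2 * ∏ j ∈ Finset.univ.erase i, (2 * ‖s j‖ / (s j).im * max 1 ‖s j‖) := by
    apply mul_nonneg (by positivity)
    apply Finset.prod_nonneg
    intro j _
    have h1 := hs j
    have h2 : (0:ℝ) ≤ max 1 ‖s j‖ := le_trans zero_le_one (le_max_left _ _)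
    positivity
  have h_bound : ∀ x : Fin r → ℝ, ∀ z ∈ Metric.ball z₀ ε, ‖F' z x‖ ≤ bound x := by
    intro x z hz
    obtain ⟨hzim, hden⟩ := hball z hz
    by_cases hx : ∀ l, 0 < x l
    · -- positive orthant
      have hyi : ∀ j, 0 < Yf r x j := fun j => Yf_pos hx j
      have hKnn : 0 ≤ ∏ l, K1 (nn l) (x l) := Finset.prod_nonneg fun l _ => K1_nonneg _ _
      have hF'norm : ‖F' z x‖ = (∏ l, K1 (nn l) (x l)) *
          (Real.exp (-(Yf r x i)) / ‖(1 - z * ((Real.exp (-(Yf r x i)) : ℝ) : ℂ))^2‖ *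
            ∏ j ∈ Finset.univ.erase i, ‖Ker (s j) (Yf r x j)‖) := by
        simp only [hF'def]
        rw [norm_mul, norm_mul, norm_div, norm_prod, Complex.norm_real,
          Real.norm_of_nonneg hKnn, Complex.norm_real,
          Real.norm_of_nonneg (Real.exp_pos _).le]
      rw [hF'norm]
      -- individual bounds
      have hb1 : Real.exp (-(Yf r x i)) / ‖(1 - z * ((Real.exp (-(Yf r x i)) : ℝ) : ℂ))^2‖
          ≤ δ⁻¹^2 * Real.exp (-((1:ℝ)/2 * Yf r x i)) := by
        have hd2 := hden (Real.exp (-(Yf r x i))) (Real.exp_pos _)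
        have hno : ‖(1 - z * ((Real.exp (-(Yf r x i)) : ℝ) : ℂ))^2‖
            = ‖1 - z * ((Real.exp (-(Yf r x i)) : ℝ) : ℂ)‖^2 := norm_pow _ _
        rw [hno]
        have hged : δ^2 ≤ ‖1 - z * ((Real.exp (-(Yf r x i)) : ℝ) : ℂ)‖^2 := by
          apply pow_le_pow_left₀ hδ.le hd2
        have hexple : Real.exp (-(Yf r x i)) ≤ Real.exp (-((1:ℝ)/2 * Yf r x i)) := by
          apply Real.exp_le_exp.2
          have := (hyi i)
          linarith
        calc Real.exp (-(Yf r x i)) / ‖1 - z * ((Real.exp (-(Yf r x i)) : ℝ) : ℂ)‖^2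
            ≤ Real.exp (-(Yf r x i)) / δ^2 := by
              apply div_le_div_of_nonneg_left (Real.exp_pos _).le (by positivity) hged
          _ = δ⁻¹^2 * Real.exp (-(Yf r x i)) := by
              rw [inv_pow]; ring
          _ ≤ δ⁻¹^2 * Real.exp (-((1:ℝ)/2 * Yf r x i)) := by
              apply mul_le_mul_of_nonneg_left hexple (by positivity)
      have hb2 : ∀ j ∈ Finset.univ.erase i, ‖Ker (s j) (Yf r x j)‖
          ≤ 2 * ‖s j‖ / (s j).im * max 1 ‖s j‖ * Real.exp (-((1:ℝ)/2 * Yf r x j)) := by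
        intro j _
        have hsn : 0 < ‖s j‖ := by
          calc (0:ℝ) < (s j).im := hs j
            _ ≤ |(s j).im| := le_abs_self _
            _ ≤ ‖s j‖ := Complex.abs_im_le_norm _
        calc ‖Ker (s j) (Yf r x j)‖
            ≤ 2 * ‖s j‖ / (s j).im * min 1 (‖s j‖ * Real.exp (-(Yf r x j))) :=
              Ker_norm_le (hs j) _
          _ ≤ 2 * ‖s j‖ / (s j).im * (max 1 ‖s j‖ * Real.exp (-((1:ℝ)/2 * Yf r x j))) := by
              apply mul_le_mul_of_nonneg_left _ (by have := hs j; positivity)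
              calc min 1 (‖s j‖ * Real.exp (-(Yf r x j)))
                  ≤ (‖s j‖ * Real.exp (-(Yf r x j))) ^ ((1:ℝ)/2) :=
                    min_le_rpow (by positivity) (by norm_num) (by norm_num)
                _ = ‖s j‖ ^ ((1:ℝ)/2) * Real.exp (-(Yf r x j)) ^ ((1:ℝ)/2) :=
                    Real.mul_rpow hsn.le (Real.exp_pos _).le
                _ ≤ max 1 ‖s j‖ * Real.exp (-((1:ℝ)/2 * Yf r x j)) := by
                    have he : Real.exp (-(Yf r x j)) ^ ((1:ℝ)/2)
                        = Real.exp (-((1:ℝ)/2 * Yf r x j)) := by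
                      rw [← Real.exp_mul]
                      congr 1
                      ring
                    rw [he]
                    apply mul_le_mul_of_nonneg_right _ (Real.exp_pos _).le
                    rcases le_total ‖s j‖ 1 with hle | hge
                    · calc ‖s j‖ ^ ((1:ℝ)/2) ≤ 1 := Real.rpow_le_one hsn.le hle (by norm_num)
                        _ ≤ max 1 ‖s j‖ := le_max_left _ _
                    · calc ‖s j‖ ^ ((1:ℝ)/2) ≤ ‖s j‖ ^ ((1:ℝ)) :=
                          Real.rpow_le_rpow_of_exponent_le hge (by norm_num)
                        _ = ‖s j‖ := Real.rpow_one _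
                        _ ≤ max 1 ‖s j‖ := le_max_right _ _
          _ = 2 * ‖s j‖ / (s j).im * max 1 ‖s j‖ * Real.exp (-((1:ℝ)/2 * Yf r x j)) := by ring
      -- combine
      have hprod2 : ∏ j ∈ Finset.univ.erase i, ‖Ker (s j) (Yf r x j)‖
          ≤ ∏ j ∈ Finset.univ.erase i,
            (2 * ‖s j‖ / (s j).im * max 1 ‖s j‖ * Real.exp (-((1:ℝ)/2 * Yf r x j))) :=
        Finset.prod_le_prod (fun j _ => norm_nonneg _) hb2
      have hsplit : ∏ j ∈ Finset.univ.erase i,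
            (2 * ‖s j‖ / (s j).im * max 1 ‖s j‖ * Real.exp (-((1:ℝ)/2 * Yf r x j)))
          = (∏ j ∈ Finset.univ.erase i, (2 * ‖s j‖ / (s j).im * max 1 ‖s j‖)) *
            ∏ j ∈ Finset.univ.erase i, Real.exp (-((1:ℝ)/2 * Yf r x j)) := by
        rw [← Finset.prod_mul_distrib]
      have hfull : Real.exp (-((1:ℝ)/2 * Yf r x i)) *
            ∏ j ∈ Finset.univ.erase i, Real.exp (-((1:ℝ)/2 * Yf r x j))
          = ∏ l, Real.exp (-(cSum r (fun _ => (1:ℝ)/2) l * x l)) := by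
        rw [Finset.mul_prod_erase Finset.univ
          (fun j => Real.exp (-((1:ℝ)/2 * Yf r x j))) (Finset.mem_univ i)]
        exact prod_exp_Yf (fun _ => (1:ℝ)/2) x
      have hDom : Dom r nn (cSum r (fun _ => (1:ℝ)/2)) x
          = (∏ l, K1 (nn l) (x l)) * ∏ l, Real.exp (-(cSum r (fun _ => (1:ℝ)/2) l * x l)) := by
        rw [Dom]; exact Finset.prod_mul_distrib
      have hKer_nonneg : (0:ℝ) ≤ ∏ j ∈ Finset.univ.erase i, ‖Ker (s j) (Yf r x j)‖ :=
        Finset.prod_nonneg fun j _ => norm_nonneg _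
      have hC2 : (0:ℝ) ≤ ∏ j ∈ Finset.univ.erase i, (2 * ‖s j‖ / (s j).im * max 1 ‖s j‖) := by
        apply Finset.prod_nonneg
        intro j _
        have h1 := hs j
        have h2 : (0:ℝ) ≤ max 1 ‖s j‖ := le_trans zero_le_one (le_max_left _ _)
        positivity
      calc (∏ l, K1 (nn l) (x l)) *
          (Real.exp (-(Yf r x i)) / ‖(1 - z * ((Real.exp (-(Yf r x i)) : ℝ) : ℂ))^2‖ *
            ∏ j ∈ Finset.univ.erase i, ‖Ker (s j) (Yf r x j)‖)
          ≤ (∏ l, K1 (nn l) (x l)) *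
            ((δ⁻¹^2 * Real.exp (-((1:ℝ)/2 * Yf r x i))) *
              ((∏ j ∈ Finset.univ.erase i, (2 * ‖s j‖ / (s j).im * max 1 ‖s j‖)) *
                ∏ j ∈ Finset.univ.erase i, Real.exp (-((1:ℝ)/2 * Yf r x j)))) := by
            apply mul_le_mul_of_nonneg_left _ hKnn
            rw [← hsplit]
            apply mul_le_mul hb1 (le_trans hprod2 le_rfl) hKer_nonneg (by positivity)
        _ = bound x := by
            simp only [hbdef]
            rw [hDom, ← hfull]
            ring
    · -- some coordinate nonpositive
      push_neg at hx
      obtain ⟨l, hl⟩ := hx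
      have hK : K1 (nn l) (x l) = 0 := K1_of_nonpos (not_lt.2 hl)
      have hprod : (∏ l, K1 (nn l) (x l)) = 0 :=
        Finset.prod_eq_zero (Finset.mem_univ l) hK
      have hLHS : ‖F' z x‖ = 0 := by
        simp only [hF'def]
        simp [hprod]
      have hRHS : bound x = 0 := by
        simp only [hbdef]
        rw [Dom, Finset.prod_eq_zero (Finset.mem_univ l) (by rw [hK, zero_mul])]
        ring
      rw [hLHS, hRHS]
  -- measurability items
  have hPcont : Continuous (fun x : Fin r → ℝ =>
      ∏ j ∈ Finset.univ.erase i, Ker (s j) (Yf r x j)) := by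
    apply continuous_finset_prod
    intro j _
    exact (Ker_continuous (hs j)).comp (Yf_continuous r j)
  have hCmeas : Measurable (fun x : Fin r → ℝ => ((∏ l, K1 (nn l) (x l) : ℝ) : ℂ)) := by
    apply Complex.measurable_ofReal.comp
    apply Finset.measurable_prod
    intro l _
    exact (K1_measurable (nn l)).comp (measurable_pi_apply l)
  have hF'meas : AEStronglyMeasurable (F' z₀) volume := by
    apply Measurable.aestronglyMeasurable
    apply hCmeas.mul
    apply Measurable.mul
    · apply Measurable.div
      · exact (Complex.measurable_ofReal.comp
          ((Real.continuous_exp.comp (Yf_continuous r i).neg).measurable))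
      · apply Measurable.pow_const
        apply Measurable.const_sub
        exact (Complex.measurable_ofReal.comp
          ((Real.continuous_exp.comp (Yf_continuous r i).neg).measurable)).const_mul z₀
    · exact hPcont.measurable
  have hF_meas : ∀ᶠ z in nhds z₀, AEStronglyMeasurable
      (fun x => Gint r nn (Function.update s i z) x) volume := by
    filter_upwards [Metric.ball_mem_nhds z₀ hεpos] with z hz
    have hzim := (hball z hz).1
    have hup : ∀ j, 0 < ((Function.update s i z) j).im := by
      intro j
      by_cases hji : j = i
      · subst hji; rw [Function.update_self]; exact hzim
      · rw [Function.update_of_ne hji]; exact hs j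
    exact (Gint_measurable r nn _ hup).aestronglyMeasurable
  have hF_int : Integrable (fun x => Gint r nn (Function.update s i z₀) x) volume := by
    have hup : ∀ j, 0 < ((Function.update s i z₀) j).im := by
      intro j
      by_cases hji : j = i
      · subst hji; rw [Function.update_self]; exact hz0
      · rw [Function.update_of_ne hji]; exact hs j
    exact Gint_integrable r nn hnn _ hup
  have hbound_int : Integrable bound volume := by
    simp only [hbdef]
    exact (Dom_integrable r nn hnn _ (cSum_pos (fun _ => by norm_num))).const_mul _
  have h_diff : ∀ᵐ x : (Fin r → ℝ) ∂volume, ∀ z ∈ Metric.ball z₀ ε,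
      HasDerivAt (fun w => Gint r nn (Function.update s i w) x) (F' z x) z := by
    apply Eventually.of_forall
    intro x z hz
    obtain ⟨hzim, hden⟩ := hball z hz
    have hEpos : 0 < Real.exp (-(Yf r x i)) := Real.exp_pos _
    have hne : 1 - z * ((Real.exp (-(Yf r x i)) : ℝ) : ℂ) ≠ 0 := by
      intro h0
      have := hden (Real.exp (-(Yf r x i))) hEpos
      rw [h0, norm_zero] at this
      linarith
    have hKd := Ker_hasDerivAt hEpos hne
    have hmain := (hKd.mul_const (∏ j ∈ Finset.univ.erase i, Ker (s j) (Yf r x j))).const_mul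
      (((∏ l, K1 (nn l) (x l) : ℝ) : ℂ))
    have heq : (fun w => Gint r nn (Function.update s i w) x)
        = fun w => ((∏ l, K1 (nn l) (x l) : ℝ) : ℂ) *
          ((fun w : ℂ => w * ((Real.exp (-(Yf r x i)) : ℝ) : ℂ) /
              (1 - w * ((Real.exp (-(Yf r x i)) : ℝ) : ℂ))) w *
            ∏ j ∈ Finset.univ.erase i, Ker (s j) (Yf r x j)) := by
      funext w
      exact hrepr w x
    rw [heq]
    exact hmain
  have hmain := hasDerivAt_integral_of_dominated_loc_of_deriv_le (Metric.ball_mem_nhds z₀ hεpos) hF_meas hF_int hF'meas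
    (Eventually.of_forall fun x => h_bound x) hbound_int h_diff
  exact hmain.2.differentiableAt

/-! ## Identity theorem: f = G on the upper polydisc -/

lemma halfPlane_isOpen : IsOpen {z : ℂ | 0 < z.im} :=
  isOpen_lt continuous_const Complex.continuous_im

lemma UpperPoly_isOpen (r : ℕ) : IsOpen (UpperPoly r) := by
  have h : UpperPoly r = ⋂ i, (fun t : Fin r → ℂ => t i) ⁻¹' {z : ℂ | 0 < z.im} := by
    ext t; simp [UpperPoly, Set.mem_iInter]
  rw [h]
  exact isOpen_iInter_of_finite fun i =>
    (halfPlane_isOpen).preimage (continuous_apply i)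

lemma update_mem_UpperPoly {r : ℕ} {s : Fin r → ℂ} (hs : s ∈ UpperPoly r) (i : Fin r)
    {z : ℂ} (hz : 0 < z.im) : Function.update s i z ∈ UpperPoly r := by
  intro j
  by_cases hji : j = i
  · subst hji; rw [Function.update_self]; exact hz
  · rw [Function.update_of_ne hji]; exact hs j

lemma f_eq_G (r : ℕ) (nn : Fin r → ℕ) (hnn : ∀ i, 1 ≤ nn i)
    (f : (Fin r → ℂ) → ℂ) (hf : IsMplBranch r nn f) :
    ∀ s ∈ UpperPoly r, f s = G r nn s := by
  have key : ∀ k : ℕ, ∀ s ∈ UpperPoly r, (∀ j : Fin r, k ≤ (j:ℕ) → ‖s j‖ < 1) →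
      f s = G r nn s := by
    intro k
    induction k with
    | zero =>
      intro s hsU hlt
      rw [hf.2 s hsU (fun i => hlt i (Nat.zero_le _)),
        G_eq_mpl r nn hnn s hsU (fun i => hlt i (Nat.zero_le _))]
    | succ k ih =>
      intro s hsU hlt
      by_cases hk : k < r
      · set i : Fin r := ⟨k, hk⟩ with hidef
        have hupdiff : ∀ z : ℂ, DifferentiableAt ℂ (fun w : ℂ => Function.update s i w) z := by
          intro z
          apply differentiableAt_pi.mpr
          intro j
          by_cases hji : j = i
          · subst hji
            simp only [Function.update_self]
            exact differentiableAt_id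
          · simp only [Function.update_of_ne hji]
            exact differentiableAt_const _
        have hφ : AnalyticOnNhd ℂ (fun z => f (Function.update s i z)) {z : ℂ | 0 < z.im} := by
          apply DifferentiableOn.analyticOnNhd _ halfPlane_isOpen
          intro z hz
          apply DifferentiableAt.differentiableWithinAt
          have hmem := update_mem_UpperPoly hsU i hz
          have hfd : DifferentiableAt ℂ f (Function.update s i z) :=
            (hf.1 _ hmem).differentiableAt ((UpperPoly_isOpen r).mem_nhds hmem)
          exact hfd.comp z (hupdiff z)
        have hψ : AnalyticOnNhd ℂ (fun z => G r nn (Function.update s i z)) {z : ℂ | 0 < z.im} :=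
          DifferentiableOn.analyticOnNhd
            (G_slice_differentiableOn r nn hnn s (fun j => hsU j) i) halfPlane_isOpen
        have hpre : IsPreconnected {z : ℂ | 0 < z.im} :=
          (convex_halfSpace_im_gt 0).isPreconnected
        have hz₀mem : (Complex.I/2 : ℂ) ∈ {z : ℂ | 0 < z.im} := by
          simp [Complex.div_im]
        have hev : (fun z => f (Function.update s i z))
            =ᶠ[nhds (Complex.I/2 : ℂ)] (fun z => G r nn (Function.update s i z)) := by
          have hopen : IsOpen {z : ℂ | 0 < z.im ∧ ‖z‖ < 1} := by
            apply IsOpen.inter halfPlane_isOpen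
            exact isOpen_lt (continuous_norm) continuous_const
          have hmem : (Complex.I/2 : ℂ) ∈ {z : ℂ | 0 < z.im ∧ ‖z‖ < 1} := by
            constructor
            · simpa using hz₀mem
            · rw [norm_div]
              simp
              norm_num
          filter_upwards [hopen.mem_nhds hmem] with z hz
          apply ih (Function.update s i z) (update_mem_UpperPoly hsU i hz.1)
          intro j hj
          by_cases hji : j = i
          · subst hji; rw [Function.update_self]; exact hz.2
          · rw [Function.update_of_ne hji]
            apply hlt j
            have hne : (j:ℕ) ≠ k := fun h => hji (Fin.ext (by rw [h, hidef]))
            omega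
        have heq := hφ.eqOn_of_preconnected_of_eventuallyEq hψ hpre hz₀mem hev
        have hsi : s i ∈ {z : ℂ | 0 < z.im} := hsU i
        have h2 := heq hsi
        simpa [Function.update_eq_self] using h2
      · apply ih s hsU
        intro j hj
        have := j.isLt
        omega
  intro s hs
  apply key r s hs
  intro j hj
  have := j.isLt
  omega

/-! ## zpow/rpow interchange -/

lemma zpow_rpow {q : ℝ} (hq : 0 < q) (m : ℤ) (θ : ℝ) :
    (q ^ m) ^ θ = (q ^ θ) ^ m := by
  rw [← Real.rpow_intCast q m, ← Real.rpow_mul hq.le, mul_comm,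
    Real.rpow_mul hq.le, Real.rpow_intCast]

end Stmt11

open Stmt11 MeasureTheory in
theorem stmt_11 (q : ℝ) (hq0 : 0 < q) (hq1 : q < 1) (r : ℕ) (hr : 1 ≤ r)
    (nn : Fin r → ℕ) (hnn : ∀ i, 1 ≤ nn i)
    (f : (Fin r → ℂ) → ℂ) (hf : IsMplBranch r nn f)
    (t : Fin r → ℂ) (ht : ∀ i, 0 < (t i).im)
    (htq : ∀ i, q < ‖t i‖) (ht1 : ∀ i, ‖t i‖ < 1)
    (hmono : ∀ i j : Fin r, i < j → ‖t i‖ < ‖t j‖)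
    (hray : ∀ i j : Fin r, i ≠ j → ∀ x : ℝ, 0 < x → t i / t j ≠ (x : ℂ))
    (u : Fin r → ℂ) (hu1 : ∀ i, 1 < ‖u i‖) (hu2 : ∀ i, ‖u i‖ < q⁻¹) :
    Summable (fun m : Fin r → ℤ =>
      ‖(∏ i, u i ^ m i) * f (fun i => (q : ℂ) ^ m i * t i)‖) := by
  classical
  set w : Fin r → ℝ := fun j => ‖u j‖ with hwdef
  -- exponents
  set θ0 : Fin r → ℝ := fun j => Real.logb q (w j)⁻¹ with hθ0def
  have hwpos : ∀ j, 0 < w j := fun j => lt_trans one_pos (hu1 j)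
  have hwinv : ∀ j, q < (w j)⁻¹ ∧ (w j)⁻¹ < 1 := by
    intro j
    constructor
    · rw [lt_inv_comm₀ hq0 (hwpos j)]
      exact hu2 j
    · rw [inv_lt_one_iff₀]
      right; exact hu1 j
  have hθ0val : ∀ j, q ^ (θ0 j) = (w j)⁻¹ :=
    fun j => Real.rpow_logb hq0 (ne_of_lt hq1) (inv_pos.2 (hwpos j))
  have hθ0pos : ∀ j, 0 < θ0 j := by
    intro j
    rw [hθ0def]
    have h1 : Real.log q < 0 := Real.log_neg hq0 hq1
    have h2 : Real.log (w j)⁻¹ < 0 := Real.log_neg (lt_trans hq0 (hwinv j).1) (hwinv j).2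
    dsimp only
    rw [← Real.log_div_log, div_pos_iff]
    right; exact ⟨h2, h1⟩
  have hθ0lt1 : ∀ j, θ0 j < 1 := by
    intro j
    rw [hθ0def]
    have h1 : Real.log q < 0 := Real.log_neg hq0 hq1
    have h2 : Real.log q < Real.log (w j)⁻¹ := by
      apply Real.log_lt_log hq0 (hwinv j).1
    dsimp only
    rw [← Real.log_div_log, div_lt_one_of_neg h1]
    exact h2
  set θp : Fin r → ℝ := fun j => (θ0 j + 1) / 2 with hθpdef
  set θm : Fin r → ℝ := fun j => θ0 j / 2 with hθmdef
  have hθp : ∀ j, θ0 j < θp j ∧ θp j < 1 ∧ 0 < θp j := by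
    intro j
    refine ⟨by rw [hθpdef]; dsimp; linarith [hθ0lt1 j], by rw [hθpdef]; dsimp; linarith [hθ0lt1 j],
      by rw [hθpdef]; dsimp; linarith [hθ0pos j]⟩
  have hθm : ∀ j, θm j < θ0 j ∧ 0 < θm j ∧ θm j < 1 := by
    intro j
    refine ⟨by rw [hθmdef]; dsimp; linarith [hθ0pos j], by rw [hθmdef]; dsimp; linarith [hθ0pos j],
      by rw [hθmdef]; dsimp; linarith [hθ0lt1 j, hθ0pos j]⟩
  -- the geometric ratios
  set ρp : Fin r → ℝ := fun j => w j * q ^ (θp j) with hρpdef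
  set ρm : Fin r → ℝ := fun j => w j * q ^ (θm j) with hρmdef
  have hρp1 : ∀ j, ρp j < 1 := by
    intro j
    have h1 : q ^ (θp j) < q ^ (θ0 j) :=
      Real.rpow_lt_rpow_of_exponent_gt hq0 hq1 (hθp j).1
    rw [hθ0val j] at h1
    have := mul_lt_mul_of_pos_left h1 (hwpos j)
    rwa [mul_inv_cancel₀ (ne_of_gt (hwpos j))] at this
  have hρppos : ∀ j, 0 < ρp j := fun j => mul_pos (hwpos j) (Real.rpow_pos_of_pos hq0 _)
  have hρm1 : ∀ j, 1 < ρm j := by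
    intro j
    have h1 : q ^ (θ0 j) < q ^ (θm j) :=
      Real.rpow_lt_rpow_of_exponent_gt hq0 hq1 (hθm j).1
    rw [hθ0val j] at h1
    have := mul_lt_mul_of_pos_left h1 (hwpos j)
    rwa [mul_inv_cancel₀ (ne_of_gt (hwpos j))] at this
  have hρmpos : ∀ j, 0 < ρm j := fun j => mul_pos (hwpos j) (Real.rpow_pos_of_pos hq0 _)
  -- per-coordinate geometric function on ℤ
  set g : Fin r → ℤ → ℝ := fun j k => if 0 ≤ k then (ρp j) ^ k else (ρm j) ^ k with hgdef
  have hgpos : ∀ j k, 0 < g j k := by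
    intro j k
    rw [hgdef]
    dsimp only
    split_ifs
    · exact zpow_pos (hρppos j) k
    · exact zpow_pos (hρmpos j) k
  have hgsummable : ∀ j, Summable (g j) := by
    intro j
    apply Summable.of_nat_of_neg
    · apply Summable.congr (summable_geometric_of_lt_one (hρppos j).le (hρp1 j))
      intro n
      rw [hgdef]
      dsimp only
      rw [if_pos (by positivity)]
      rw [zpow_natCast]
    · apply Summable.congr (summable_geometric_of_lt_one (by positivity)
        (by rw [inv_lt_one_iff₀]; right; exact hρm1 j) : Summable (fun n : ℕ => ((ρm j)⁻¹) ^ n))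
      intro n
      rw [hgdef]
      dsimp only
      by_cases hn : n = 0
      · subst hn; norm_num
      · rw [if_neg (by omega)]
        rw [zpow_neg, zpow_natCast, inv_pow]
  -- constants
  set Kc : Fin r → ℝ := fun j => 2 * ‖t j‖ / (t j).im with hKcdef
  have htnorm : ∀ j, 0 < ‖t j‖ := fun j =>
    lt_of_lt_of_le (ht j) ((le_abs_self _).trans (Complex.abs_im_le_norm _))
  have hKcpos : ∀ j, 0 < Kc j := by
    intro j; rw [hKcdef]; dsimp only
    have h1 := ht j; have h2 := htnorm j; positivity
  set B : ℝ := ∏ i, ((Nat.factorial (nn i - 1) : ℝ) / (cSum r θm i) ^ (nn i)) with hBdef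
  have hcmpos : ∀ i, 0 < cSum r θm i := cSum_pos (fun j => (hθm j).2.1)
  have hBpos : 0 < B := by
    rw [hBdef]
    apply Finset.prod_pos
    intro i _
    have h1 := hcmpos i
    have h2 := Nat.factorial_pos (nn i - 1)
    positivity
  set Cf : ℝ := (∏ i, (Nat.factorial (nn i - 1) : ℝ))⁻¹ with hCfdef
  have hCfpos : 0 < Cf := by
    rw [hCfdef]
    apply inv_pos.2
    apply Finset.prod_pos
    intro i _
    exact_mod_cast Nat.factorial_pos (nn i - 1)
  set Cbig : ℝ := Cf * B * ∏ j, Kc j with hCbigdef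
  -- the summable majorant
  have hmaj : Summable (fun m : Fin r → ℤ => Cbig * ∏ j, g j (m j)) := by
    apply Summable.mul_left
    exact summable_pi_prod g (fun j k => (hgpos j k).le) hgsummable
  apply Summable.of_nonneg_of_le (fun m => norm_nonneg _) _ hmaj
  -- the main estimate, for each m
  intro m
  set θ : Fin r → ℝ := fun j => if 0 ≤ m j then θp j else θm j with hθdef
  have hθpos : ∀ j, 0 < θ j := by
    intro j; rw [hθdef]; dsimp only; split_ifs
    · exact (hθp j).2.2
    · exact (hθm j).2.1
  have hθle1 : ∀ j, θ j ≤ 1 := by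
    intro j; rw [hθdef]; dsimp only; split_ifs
    · exact (hθp j).2.1.le
    · exact (hθm j).2.2.le
  set s : Fin r → ℂ := fun i => (q : ℂ) ^ m i * t i with hsdef
  have hqm : ∀ i, (q:ℂ) ^ m i = ((q ^ m i : ℝ) : ℂ) := fun i => (Complex.ofReal_zpow q (m i)).symm
  have hsim : ∀ i, (s i).im = q ^ m i * (t i).im := by
    intro i
    rw [hsdef]
    dsimp only
    rw [hqm i, Complex.im_ofReal_mul]
  have hsU : ∀ i, 0 < (s i).im := by
    intro i
    rw [hsim i]
    exact mul_pos (zpow_pos hq0 _) (ht i)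
  have hsnorm : ∀ i, ‖s i‖ = q ^ m i * ‖t i‖ := by
    intro i
    rw [hsdef]
    dsimp only
    rw [norm_mul, hqm i, Complex.norm_real, Real.norm_of_nonneg (zpow_pos hq0 (m i)).le]
  -- f s = G s
  have hfG : f s = G r nn s := f_eq_G r nn hnn f hf s hsU
  -- Kc is ray-invariant
  have hKcinv : ∀ j, 2 * ‖s j‖ / (s j).im = Kc j := by
    intro j
    rw [hsnorm j, hsim j, hKcdef]
    dsimp only
    have h1 : (t j).im ≠ 0 := ne_of_gt (ht j)
    have h2 : (q ^ m j : ℝ) ≠ 0 := ne_of_gt (zpow_pos hq0 _)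
    field_simp
  -- norm bound on G s
  have hGbound := norm_integral_Gint_le r nn hnn s hsU θ hθpos hθle1
  -- bound the factor products
  have hfac1 : ∀ j, ‖s j‖ ^ (θ j) ≤ (q ^ (θ j)) ^ (m j) := by
    intro j
    rw [hsnorm j, Real.mul_rpow (zpow_pos hq0 (m j)).le (htnorm j).le]
    calc (q ^ m j) ^ (θ j) * ‖t j‖ ^ (θ j)
        ≤ (q ^ m j) ^ (θ j) * 1 := by
          apply mul_le_mul_of_nonneg_left _ (Real.rpow_nonneg (zpow_pos hq0 (m j)).le _)
          exact Real.rpow_le_one (htnorm j).le (ht1 j).le (hθpos j).le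
      _ = (q ^ (θ j)) ^ (m j) := by rw [mul_one, zpow_rpow hq0]
  have hfac2 : ∏ i, ((Nat.factorial (nn i - 1) : ℝ) / (cSum r θ i) ^ (nn i)) ≤ B := by
    rw [hBdef]
    apply Finset.prod_le_prod
    · intro i _
      have h1 := cSum_pos hθpos i
      positivity
    · intro i _
      apply div_le_div_of_nonneg_left (by positivity) (pow_pos (hcmpos i) _)
      apply pow_le_pow_left₀ (hcmpos i).le
      apply Finset.sum_le_sum
      intro j _
      rw [hθdef]
      dsimp only
      split_ifs
      · linarith [(hθm j).1, (hθp j).1]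
      · exact le_rfl
  -- assemble the bound on ‖G s‖
  have hGdef : G r nn s = ((∏ i, (Nat.factorial (nn i - 1) : ℂ)))⁻¹ * ∫ x, Gint r nn s x := rfl
  have hcnorm : ‖∏ i, (Nat.factorial (nn i - 1) : ℂ)‖ = ∏ i, (Nat.factorial (nn i - 1) : ℝ) := by
    rw [norm_prod]
    exact Finset.prod_congr rfl fun i _ => Complex.norm_natCast _
  have hP1 : ∏ j, (2 * ‖s j‖ / (s j).im * ‖s j‖ ^ (θ j))
      ≤ ∏ j, (Kc j * (q ^ (θ j)) ^ (m j)) := by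
    apply Finset.prod_le_prod
    · intro j _
      have h1 := hsU j
      have h2 : 0 < ‖s j‖ := lt_of_lt_of_le (hsU j) ((le_abs_self _).trans (Complex.abs_im_le_norm _))
      positivity
    · intro j _
      rw [hKcinv j]
      exact mul_le_mul_of_nonneg_left (hfac1 j) (hKcpos j).le
  have hP2nonneg : (0:ℝ) ≤ ∏ i, ((Nat.factorial (nn i - 1) : ℝ) / (cSum r θ i) ^ (nn i)) := by
    apply Finset.prod_nonneg
    intro i _
    have h1 := cSum_pos hθpos i
    positivity
  have hP1'nonneg : (0:ℝ) ≤ ∏ j, (Kc j * (q ^ (θ j)) ^ (m j)) := by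
    apply Finset.prod_nonneg
    intro j _
    exact mul_nonneg (hKcpos j).le (zpow_pos (Real.rpow_pos_of_pos hq0 _) _).le
  have hnormG : ‖G r nn s‖ ≤ Cf * ((∏ j, (Kc j * (q ^ (θ j)) ^ (m j))) * B) := by
    rw [hGdef, norm_mul, norm_inv, hcnorm]
    apply mul_le_mul_of_nonneg_left _ hCfpos.le
    calc ‖∫ x, Gint r nn s x‖
        ≤ (∏ j, (2 * ‖s j‖ / (s j).im * ‖s j‖ ^ (θ j))) *
          ∏ i, ((Nat.factorial (nn i - 1) : ℝ) / (cSum r θ i) ^ (nn i)) := hGbound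
      _ ≤ (∏ j, (Kc j * (q ^ (θ j)) ^ (m j))) * B :=
          mul_le_mul hP1 hfac2 hP2nonneg hP1'nonneg
  -- transformation into the geometric majorant
  have hgj : ∀ j, (w j * q ^ (θ j)) ^ (m j) = g j (m j) := by
    intro j
    rw [hθdef, hgdef, hρpdef, hρmdef]
    dsimp only
    split_ifs with h
    · rfl
    · rfl
  have hsplit : (∏ j, w j ^ (m j)) * (∏ j, (q ^ (θ j)) ^ (m j)) = ∏ j, g j (m j) := by
    rw [← Finset.prod_mul_distrib]
    exact Finset.prod_congr rfl fun j _ => by rw [← mul_zpow, hgj j]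
  have hwprod_nonneg : (0:ℝ) ≤ ∏ j, w j ^ (m j) :=
    Finset.prod_nonneg fun j _ => (zpow_pos (hwpos j) _).le
  calc ‖(∏ i, u i ^ m i) * f s‖
      = (∏ j, w j ^ (m j)) * ‖G r nn s‖ := by
        rw [norm_mul, hfG]
        congr 1
        rw [norm_prod]
        exact Finset.prod_congr rfl fun j _ => norm_zpow _ _
    _ ≤ (∏ j, w j ^ (m j)) * (Cf * ((∏ j, (Kc j * (q ^ (θ j)) ^ (m j))) * B)) :=
        mul_le_mul_of_nonneg_left hnormG hwprod_nonneg
    _ = Cbig * ∏ j, g j (m j) := by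
        have hp2 : ∏ j, (Kc j * (q ^ (θ j)) ^ (m j))
            = (∏ j, Kc j) * ∏ j, (q ^ (θ j)) ^ (m j) := Finset.prod_mul_distrib
        rw [hp2, ← hsplit, hCbigdef]
        ring
end

section
/- Let m ≥ 1 and let x₁,…,x_m ∈ ℂ be such that every consecutive sum x_j + x_{j+1} + ⋯ + x_k (for 1 ≤ j ≤ k ≤ m) is nonzero. Then ∑_{p=0}^{m} (−1)^p · ( ∏_{j=1}^{p} (x_j + x_{j+1} + ⋯ + x_p) )^{−1} · ( ∏_{j=p+1}^{m} (x_{p+1} + x_{p+2} + ⋯ + x_j) )^{−1} = 0, where empty products equal 1. -/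
/-- The partial-fraction identity
`∑_{p=0}^{m} (−1)^p · (∏_{j=1}^{p} (x_j+⋯+x_p))⁻¹ · (∏_{j=p+1}^{m} (x_{p+1}+⋯+x_j))⁻¹ = 0`
(0-based indexing: `x 0, …, x (m-1)`), valid when all consecutive sums are nonzero. -/
theorem stmt_17 (m : ℕ) (hm : 1 ≤ m) (x : ℕ → ℂ)
    (hx : ∀ j k : ℕ, j ≤ k → k < m → ∑ i ∈ Finset.Icc j k, x i ≠ 0) :
    ∑ p ∈ Finset.range (m + 1),
      (-1 : ℂ) ^ p * (∏ j ∈ Finset.range p, ∑ i ∈ Finset.Ico j p, x i)⁻¹ *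
        (∏ j ∈ Finset.Ico p m, ∑ i ∈ Finset.Icc p j, x i)⁻¹ = 0 := by
  classical
  set t : ℕ → ℂ := fun p => ∑ i ∈ Finset.range p, x i with ht
  have hdiff : ∀ j p : ℕ, j ≤ p → ∑ i ∈ Finset.Ico j p, x i = t p - t j := by
    intro j p h
    rw [eq_sub_iff_add_eq, ht]
    beta_reduce
    rw [← Nat.Ico_zero_eq_range, add_comm,
      Finset.sum_Ico_consecutive _ (Nat.zero_le j) h, Nat.Ico_zero_eq_range]
  have hne : ∀ j p : ℕ, j < p → p ≤ m → t p - t j ≠ 0 := by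
    intro j p hjp hpm
    rw [← hdiff j p hjp.le]
    have hp : p = (p - 1) + 1 := by omega
    rw [hp, Finset.Ico_add_one_right_eq_Icc]
    exact hx j (p - 1) (by omega) (by omega)
  have hinj : Set.InjOn t (Finset.range (m + 1)) := by
    intro a ha b hb hab
    simp only [Finset.coe_range, Set.mem_Iio] at ha hb
    by_contra hab'
    rcases Nat.lt_or_ge a b with h | h
    · exact hne a b h (by omega) (by rw [hab]; ring)
    · exact hne b a (by omega) (by omega) (by rw [hab]; ring)
  have hsum := Lagrange.sum_basis hinj ⟨0, Finset.mem_range.2 (Nat.succ_pos m)⟩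
  have hcoeff := congrArg (fun q : Polynomial ℂ => q.coeff m) hsum
  simp only [Polynomial.finset_sum_coeff, Polynomial.coeff_one] at hcoeff
  rw [if_neg (by omega : ¬ m = 0)] at hcoeff
  have hbasis : ∀ p ∈ Finset.range (m + 1),
      (Lagrange.basis (Finset.range (m + 1)) t p).coeff m
        = ∏ j ∈ (Finset.range (m + 1)).erase p, (t p - t j)⁻¹ := by
    intro p hp
    have hdeg := Lagrange.natDegree_basis hinj hp
    rw [Finset.card_range, Nat.add_sub_cancel] at hdeg
    have hl := Polynomial.coeff_natDegree (p := Lagrange.basis (Finset.range (m + 1)) t p)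
    rw [hdeg] at hl
    rw [hl, Lagrange.basis, Polynomial.leadingCoeff_prod]
    refine Finset.prod_congr rfl fun j hj => ?_
    have hjp : t p ≠ t j := fun h =>
      (Finset.mem_erase.1 hj).1.symm (hinj (Finset.mem_coe.2 hp)
        (Finset.mem_coe.2 (Finset.mem_of_mem_erase hj)) h)
    rw [Lagrange.basisDivisor, Polynomial.leadingCoeff_mul, Polynomial.leadingCoeff_C,
      (Polynomial.monic_X_sub_C (t j)).leadingCoeff, mul_one]
  rw [Finset.sum_congr rfl hbasis] at hcoeff
  have key : ∀ p ∈ Finset.range (m + 1),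
      (-1 : ℂ) ^ p * (∏ j ∈ Finset.range p, ∑ i ∈ Finset.Ico j p, x i)⁻¹ *
        (∏ j ∈ Finset.Ico p m, ∑ i ∈ Finset.Icc p j, x i)⁻¹
      = (-1 : ℂ) ^ m * ∏ j ∈ (Finset.range (m + 1)).erase p, (t p - t j)⁻¹ := by
    intro p hp
    rw [Finset.mem_range, Nat.lt_succ_iff] at hp
    have h1 : ∏ j ∈ Finset.range p, ∑ i ∈ Finset.Ico j p, x i
        = ∏ j ∈ Finset.range p, (t p - t j) :=
      Finset.prod_congr rfl fun j hj => hdiff j p (le_of_lt (Finset.mem_range.1 hj))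
    have h2 : ∏ j ∈ Finset.Ico p m, ∑ i ∈ Finset.Icc p j, x i
        = ∏ j ∈ Finset.Ico (p + 1) (m + 1), (t j - t p) := by
      rw [← Finset.prod_Ico_add' (fun j => t j - t p) p m 1]
      refine Finset.prod_congr rfl fun j hj => ?_
      rw [← Finset.Ico_add_one_right_eq_Icc]
      exact hdiff p (j + 1) (by have := (Finset.mem_Ico.1 hj).1; omega)
    have h3 : ∏ j ∈ Finset.Ico (p + 1) (m + 1), (t j - t p)
        = (-1 : ℂ) ^ (m - p) * ∏ j ∈ Finset.Ico (p + 1) (m + 1), (t p - t j) := by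
      rw [Finset.prod_congr rfl (fun j _ => show t j - t p = (-1) * (t p - t j) by ring),
        Finset.prod_mul_distrib, Finset.prod_const, Nat.card_Ico,
        (by omega : m + 1 - (p + 1) = m - p)]
    have hsplit : (Finset.range (m + 1)).erase p
        = Finset.range p ∪ Finset.Ico (p + 1) (m + 1) := by
      ext j
      simp only [Finset.mem_erase, Finset.mem_range, Finset.mem_union, Finset.mem_Ico]
      omega
    have hdisj : Disjoint (Finset.range p) (Finset.Ico (p + 1) (m + 1)) := by
      rw [Finset.disjoint_left]
      intro a ha hb
      rw [Finset.mem_range] at ha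
      rw [Finset.mem_Ico] at hb
      omega
    rw [h1, h2, h3, hsplit, Finset.prod_union hdisj, Finset.prod_inv_distrib,
      Finset.prod_inv_distrib, mul_inv, ← inv_pow, inv_neg, inv_one,
      show ((-1 : ℂ)) ^ m = (-1) ^ p * (-1) ^ (m - p) by rw [← pow_add]; congr 1; omega]
    ring
  rw [Finset.sum_congr rfl key, ← Finset.mul_sum, hcoeff, mul_zero]
end

section
/- Let V = V_B ⊕ V_F and let R = R_B ⊕ R_F ⊆ ⋀²V be a subspace with R_B ⊆ ⋀²V_B and R_F ⊆ (V_B⊗V_F) ⊕ ⋀²V_F. Assume: (1) the restriction of π_F to R_F is a linear isomorphism R_F ≅ ⋀²V_F; define α : ⋀²V_F → V_B⊗V_F by α(w) = −π_mix( (π_F|_{R_F})^{−1}(w) ), and let ᾱ : V_F⊗V_F → V_B⊗V_F be α precomposed with the canonical surjection V_F⊗V_F → ⋀²V_F. (2) The two maps α₃⁽¹⁾, α₃⁽²⁾ : V_F^{⊗3} → ⋀²V_B ⊗ V_F, defined by α₃⁽¹⁾ = (∧_B ⊗ id_{V_F}) ∘ (id_{V_B} ⊗ ᾱ) ∘ (ᾱ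 ⊗ id_{V_F}) and α₃⁽²⁾ = (∧_B ⊗ id_{V_F}) ∘ (id_{V_B} ⊗ ᾱ) ∘ (s ⊗ id_{V_F}) ∘ (id_{V_F} ⊗ ᾱ), where ∧_B : V_B⊗V_B → ⋀²V_B is the wedge map and s : V_F⊗V_B → V_B⊗V_F the swap, satisfy: the image of α₃⁽¹⁾ − α₃⁽²⁾ is contained in the image of R_B ⊗ V_F in ⋀²V_B ⊗ V_F. Set Y = ⋀V/⟨R⟩ and Y_B = ⋀V_B/⟨R_B⟩. Then the k-algebra homomorphism Y_B → Y induced by the inclusion V_B ↪ V is injective, and the Y_B-linear map Y_B ⊕ (Y_B ⊗_k V_F) → Y sending (y, y′⊗f) to (image of y) + (image of y′)·(image of f) is a bijection; in particular Y is a free Y_B-module. -/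
open scoped TensorProduct

section QuadraticFibration

variable (k : Type*) [Field k] [CharZero k]
  (VB VF : Type*) [AddCommGroup VB] [Module k VB] [AddCommGroup VF] [Module k VF]

/-- The inclusion `⋀V_B → ⋀V` induced by `V_B ↪ V = V_B ⊕ V_F`. -/
noncomputable def incB : ExteriorAlgebra k VB →ₐ[k] ExteriorAlgebra k (VB × VF) :=
  ExteriorAlgebra.map (LinearMap.inl k VB VF)

/-- The inclusion `⋀V_F → ⋀V` induced by `V_F ↪ V = V_B ⊕ V_F`. -/
noncomputable def incF : ExteriorAlgebra k VF →ₐ[k] ExteriorAlgebra k (VB × VF) :=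
  ExteriorAlgebra.map (LinearMap.inr k VB VF)

/-- The projection `⋀V → ⋀V_F` induced by `V = V_B ⊕ V_F → V_F`; on the
degree-2 part it is the projection `π_F : ⋀²V → ⋀²V_F`. -/
noncomputable def projF : ExteriorAlgebra k (VB × VF) →ₐ[k] ExteriorAlgebra k VF :=
  ExteriorAlgebra.map (LinearMap.snd k VB VF)

/-- The injective map `V_B ⊗ V_F → ⋀²V ⊆ ⋀V`, `b ⊗ f ↦ b ∧ f`, identifying
`V_B ⊗ V_F` with the summand `V_B ∧ V_F` of `⋀²V`. -/
noncomputable def mixMap : VB ⊗[k] VF →ₗ[k] ExteriorAlgebra k (VB × VF) :=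
  TensorProduct.lift ((LinearMap.mul k (ExteriorAlgebra k (VB × VF))).compl₁₂
    ((ExteriorAlgebra.ι k).comp (LinearMap.inl k VB VF))
    ((ExteriorAlgebra.ι k).comp (LinearMap.inr k VB VF)))

/-- The wedge map `∧_B : V_B ⊗ V_B → ⋀²V_B ⊆ ⋀V_B`. -/
noncomputable def wedgeB : VB ⊗[k] VB →ₗ[k] ExteriorAlgebra k VB :=
  TensorProduct.lift ((LinearMap.mul k (ExteriorAlgebra k VB)).compl₁₂
    (ExteriorAlgebra.ι k) (ExteriorAlgebra.ι k))

/-- The canonical surjection `V_F ⊗ V_F → ⋀²V_F ⊆ ⋀V_F`. -/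
noncomputable def wedgeF : VF ⊗[k] VF →ₗ[k] ExteriorAlgebra k VF :=
  TensorProduct.lift ((LinearMap.mul k (ExteriorAlgebra k VF)).compl₁₂
    (ExteriorAlgebra.ι k) (ExteriorAlgebra.ι k))

/-- `α₃⁽¹⁾ = (∧_B ⊗ id) ∘ (id_B ⊗ ᾱ) ∘ (ᾱ ⊗ id)` on `V_F^{⊗3}`, with values in
`⋀²V_B ⊗ V_F ⊆ ⋀V_B ⊗ V_F`. -/
noncomputable def alpha31 (abar : VF ⊗[k] VF →ₗ[k] VB ⊗[k] VF) :
    (VF ⊗[k] VF) ⊗[k] VF →ₗ[k] ExteriorAlgebra k VB ⊗[k] VF :=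
  TensorProduct.map (wedgeB k VB) LinearMap.id ∘ₗ
  (TensorProduct.assoc k VB VB VF).symm.toLinearMap ∘ₗ
  TensorProduct.map LinearMap.id abar ∘ₗ
  (TensorProduct.assoc k VB VF VF).toLinearMap ∘ₗ
  TensorProduct.map abar LinearMap.id

/-- `α₃⁽²⁾ = (∧_B ⊗ id) ∘ (id_B ⊗ ᾱ) ∘ (s ⊗ id) ∘ (id_F ⊗ ᾱ)` on `V_F^{⊗3}`. -/
noncomputable def alpha32 (abar : VF ⊗[k] VF →ₗ[k] VB ⊗[k] VF) :
    (VF ⊗[k] VF) ⊗[k] VF →ₗ[k] ExteriorAlgebra k VB ⊗[k] VF :=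
  TensorProduct.map (wedgeB k VB) LinearMap.id ∘ₗ
  (TensorProduct.assoc k VB VB VF).symm.toLinearMap ∘ₗ
  TensorProduct.map LinearMap.id abar ∘ₗ
  (TensorProduct.assoc k VB VF VF).toLinearMap ∘ₗ
  TensorProduct.map (TensorProduct.comm k VF VB).toLinearMap LinearMap.id ∘ₗ
  (TensorProduct.assoc k VF VB VF).symm.toLinearMap ∘ₗ
  TensorProduct.map LinearMap.id abar ∘ₗ
  (TensorProduct.assoc k VF VF VF).toLinearMap

end QuadraticFibration
namespace Stmt18
set_option linter.unusedSectionVars false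

open TensorProduct

variable (k : Type*) [Field k] [CharZero k]
  (VB VF : Type*) [AddCommGroup VB] [Module k VB] [AddCommGroup VF] [Module k VF]
  (RB : Submodule k (ExteriorAlgebra k VB))

noncomputable abbrev YB := RingQuot (fun a b : ExteriorAlgebra k VB => b = 0 ∧ a ∈ RB)

noncomputable def mkB : ExteriorAlgebra k VB →ₐ[k] YB k VB RB :=
  RingQuot.mkAlgHom k _

lemma mkB_def : mkB k VB RB =
    RingQuot.mkAlgHom k (fun a b : ExteriorAlgebra k VB => b = 0 ∧ a ∈ RB) := rfl

lemma mkB_zero_of_mem {x : ExteriorAlgebra k VB} (hx : x ∈ RB) : mkB k VB RB x = 0 := by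
  have := RingQuot.mkAlgHom_rel k (s := fun a b : ExteriorAlgebra k VB => b = 0 ∧ a ∈ RB)
    (x := x) (y := 0) ⟨rfl, hx⟩
  simpa [mkB] using this

noncomputable def betaB : VB →ₗ[k] YB k VB RB :=
  (mkB k VB RB).toLinearMap ∘ₗ ExteriorAlgebra.ι k

lemma betaB_apply (b : VB) : betaB k VB RB b = mkB k VB RB (ExteriorAlgebra.ι k b) := rfl

lemma betaB_sq (b : VB) : betaB k VB RB b * betaB k VB RB b = 0 := by
  rw [betaB_apply, ← map_mul, ExteriorAlgebra.ι_sq_zero, map_zero]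

lemma betaB_swap (a b : VB) :
    betaB k VB RB a * betaB k VB RB b = - (betaB k VB RB b * betaB k VB RB a) := by
  have h := ExteriorAlgebra.ι_add_mul_swap (R := k) a b
  have := congrArg (mkB k VB RB) h
  rw [map_add, map_mul, map_mul, map_zero] at this
  rw [eq_neg_iff_add_eq_zero]
  exact this

end Stmt18
namespace Stmt18
set_option linter.unusedSectionVars false

open TensorProduct

variable (k : Type*) [Field k] [CharZero k]
  (VB VF : Type*) [AddCommGroup VB] [Module k VB] [AddCommGroup VF] [Module k VF]
  (RB : Submodule k (ExteriorAlgebra k VB))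

noncomputable def muB : YB k VB RB ⊗[k] VB →ₗ[k] YB k VB RB :=
  TensorProduct.lift ((LinearMap.mul k (YB k VB RB)).compl₂ (betaB k VB RB))

@[simp] lemma muB_tmul (y : YB k VB RB) (b : VB) :
    muB k VB RB (y ⊗ₜ b) = y * betaB k VB RB b := by
  simp [muB]

noncomputable def muE : YB k VB RB ⊗[k] ExteriorAlgebra k VB →ₗ[k] YB k VB RB :=
  TensorProduct.lift ((LinearMap.mul k (YB k VB RB)).compl₂ (mkB k VB RB).toLinearMap)

@[simp] lemma muE_tmul (y : YB k VB RB) (w : ExteriorAlgebra k VB) :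
    muE k VB RB (y ⊗ₜ w) = y * mkB k VB RB w := by
  simp [muE]

noncomputable def mu2 : YB k VB RB ⊗[k] (VB ⊗[k] VF) →ₗ[k] YB k VB RB ⊗[k] VF :=
  TensorProduct.map (muB k VB RB) LinearMap.id ∘ₗ
    (TensorProduct.assoc k (YB k VB RB) VB VF).symm.toLinearMap

@[simp] lemma mu2_tmul (y : YB k VB RB) (c : VB) (f : VF) :
    mu2 k VB VF RB (y ⊗ₜ (c ⊗ₜ f)) = (y * betaB k VB RB c) ⊗ₜ f := by
  simp [mu2]

noncomputable def mu3 :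
    YB k VB RB ⊗[k] (ExteriorAlgebra k VB ⊗[k] VF) →ₗ[k] YB k VB RB ⊗[k] VF :=
  TensorProduct.map (muE k VB RB) LinearMap.id ∘ₗ
    (TensorProduct.assoc k (YB k VB RB) (ExteriorAlgebra k VB) VF).symm.toLinearMap

@[simp] lemma mu3_tmul (y : YB k VB RB) (w : ExteriorAlgebra k VB) (f : VF) :
    mu3 k VB VF RB (y ⊗ₜ (w ⊗ₜ f)) = (y * mkB k VB RB w) ⊗ₜ f := by
  simp [mu3]

noncomputable def Hmap : (YB k VB RB ⊗[k] VF) ⊗[k] VB →ₗ[k] YB k VB RB ⊗[k] VF :=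
  TensorProduct.map (muB k VB RB) LinearMap.id ∘ₗ
    (TensorProduct.assoc k (YB k VB RB) VB VF).symm.toLinearMap ∘ₗ
    TensorProduct.map LinearMap.id (TensorProduct.comm k VF VB).toLinearMap ∘ₗ
    (TensorProduct.assoc k (YB k VB RB) VF VB).toLinearMap

@[simp] lemma Hmap_tmul (y : YB k VB RB) (h : VF) (b : VB) :
    Hmap k VB VF RB ((y ⊗ₜ h) ⊗ₜ b) = (y * betaB k VB RB b) ⊗ₜ h := by
  simp [Hmap]

noncomputable def nuE :
    (YB k VB RB ⊗[k] VF) ⊗[k] ExteriorAlgebra k VB →ₗ[k] YB k VB RB ⊗[k] VF :=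
  TensorProduct.map (muE k VB RB) LinearMap.id ∘ₗ
    (TensorProduct.assoc k (YB k VB RB) (ExteriorAlgebra k VB) VF).symm.toLinearMap ∘ₗ
    TensorProduct.map LinearMap.id (TensorProduct.comm k VF (ExteriorAlgebra k VB)).toLinearMap ∘ₗ
    (TensorProduct.assoc k (YB k VB RB) VF (ExteriorAlgebra k VB)).toLinearMap

@[simp] lemma nuE_tmul (y : YB k VB RB) (h : VF) (w : ExteriorAlgebra k VB) :
    nuE k VB VF RB ((y ⊗ₜ h) ⊗ₜ w) = (y * mkB k VB RB w) ⊗ₜ h := by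
  simp [nuE]

variable (abar : VF ⊗[k] VF →ₗ[k] VB ⊗[k] VF)

noncomputable def Gmap : (YB k VB RB ⊗[k] VF) ⊗[k] VF →ₗ[k] YB k VB RB ⊗[k] VF :=
  mu2 k VB VF RB ∘ₗ TensorProduct.map LinearMap.id abar ∘ₗ
    (TensorProduct.assoc k (YB k VB RB) VF VF).toLinearMap

@[simp] lemma Gmap_tmul (y : YB k VB RB) (h : VF) (f : VF) :
    Gmap k VB VF RB abar ((y ⊗ₜ h) ⊗ₜ f) = mu2 k VB VF RB (y ⊗ₜ abar (h ⊗ₜ f)) := by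
  simp [Gmap]

end Stmt18
namespace Stmt18
set_option linter.unusedSectionVars false

open TensorProduct

variable (k : Type*) [Field k] [CharZero k]
  (VB VF : Type*) [AddCommGroup VB] [Module k VB] [AddCommGroup VF] [Module k VF]
  (RB : Submodule k (ExteriorAlgebra k VB))
  (abar : VF ⊗[k] VF →ₗ[k] VB ⊗[k] VF)

@[simp] lemma wedgeB_tmul (c c' : VB) :
    wedgeB k VB (c ⊗ₜ c') = ExteriorAlgebra.ι k c * ExteriorAlgebra.ι k c' := by
  simp [wedgeB]

@[simp] lemma wedgeF_tmul (g f : VF) :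
    wedgeF k VF (g ⊗ₜ f) = ExteriorAlgebra.ι k g * ExteriorAlgebra.ι k f := by
  simp [wedgeF]

section signs

variable (habar0 : ∀ f : VF, abar (f ⊗ₜ f) = 0)
include habar0

lemma abar_antisymm (h f : VF) : abar (h ⊗ₜ f) = - abar (f ⊗ₜ h) := by
  have := habar0 (h + f)
  rw [tmul_add, add_tmul, add_tmul, map_add, map_add, map_add, habar0 h, habar0 f] at this
  rw [eq_neg_iff_add_eq_zero, add_comm]
  simpa using this

end signs

/-- `(c ⊗ k) ⊗ f ↦ c ⊗ ᾱ(k ⊗ f) ↦ (c ∧ -) ⊗ -`. -/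
noncomputable def Phi31 : (VB ⊗[k] VF) ⊗[k] VF →ₗ[k] ExteriorAlgebra k VB ⊗[k] VF :=
  TensorProduct.map (wedgeB k VB) LinearMap.id ∘ₗ
  (TensorProduct.assoc k VB VB VF).symm.toLinearMap ∘ₗ
  TensorProduct.map LinearMap.id abar ∘ₗ
  (TensorProduct.assoc k VB VF VF).toLinearMap

/-- `h ⊗ (c ⊗ k) ↦ c ⊗ ᾱ(h ⊗ k) ↦ (c ∧ -) ⊗ -`. -/
noncomputable def Psi : VF ⊗[k] (VB ⊗[k] VF) →ₗ[k] ExteriorAlgebra k VB ⊗[k] VF :=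
  TensorProduct.map (wedgeB k VB) LinearMap.id ∘ₗ
  (TensorProduct.assoc k VB VB VF).symm.toLinearMap ∘ₗ
  TensorProduct.map LinearMap.id abar ∘ₗ
  (TensorProduct.assoc k VB VF VF).toLinearMap ∘ₗ
  TensorProduct.map (TensorProduct.comm k VF VB).toLinearMap LinearMap.id ∘ₗ
  (TensorProduct.assoc k VF VB VF).symm.toLinearMap

lemma alpha31_eq (h g f : VF) :
    alpha31 k VB VF abar ((h ⊗ₜ g) ⊗ₜ f) = Phi31 k VB VF abar (abar (h ⊗ₜ g) ⊗ₜ f) := by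
  simp [alpha31, Phi31]

lemma alpha32_eq (h g f : VF) :
    alpha32 k VB VF abar ((h ⊗ₜ g) ⊗ₜ f) = Psi k VB VF abar (h ⊗ₜ abar (g ⊗ₜ f)) := by
  simp [alpha32, Psi]

lemma Phi31_tmul (c : VB) (kk f : VF) :
    Phi31 k VB VF abar ((c ⊗ₜ kk) ⊗ₜ f) =
      TensorProduct.map (wedgeB k VB) LinearMap.id
        ((TensorProduct.assoc k VB VB VF).symm (c ⊗ₜ abar (kk ⊗ₜ f))) := by
  simp [Phi31]

lemma Psi_tmul (h : VF) (c : VB) (kk : VF) :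
    Psi k VB VF abar (h ⊗ₜ (c ⊗ₜ kk)) =
      TensorProduct.map (wedgeB k VB) LinearMap.id
        ((TensorProduct.assoc k VB VB VF).symm (c ⊗ₜ abar (h ⊗ₜ kk))) := by
  simp [Psi]

section signs2

variable (habar0 : ∀ f : VF, abar (f ⊗ₜ f) = 0)
include habar0

lemma PsiPhi (h : VF) (u : VB ⊗[k] VF) :
    Psi k VB VF abar (h ⊗ₜ u) = - Phi31 k VB VF abar (u ⊗ₜ h) := by
  induction u using TensorProduct.induction_on with
  | zero => simp
  | tmul c kk =>
      rw [Psi_tmul, Phi31_tmul, abar_antisymm k VB VF abar habar0 h kk,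
        tmul_neg, map_neg, map_neg]
  | add u1 u2 h1 h2 =>
      rw [tmul_add, add_tmul, map_add, map_add, h1, h2, neg_add]

lemma a31_swap12 (h g f : VF) :
    alpha31 k VB VF abar ((h ⊗ₜ g) ⊗ₜ f) = - alpha31 k VB VF abar ((g ⊗ₜ h) ⊗ₜ f) := by
  rw [alpha31_eq, alpha31_eq, abar_antisymm k VB VF abar habar0 h g, neg_tmul, map_neg]

lemma a32_swap23 (h g f : VF) :
    alpha32 k VB VF abar ((h ⊗ₜ g) ⊗ₜ f) = - alpha32 k VB VF abar ((h ⊗ₜ f) ⊗ₜ g) := by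
  rw [alpha32_eq, alpha32_eq, abar_antisymm k VB VF abar habar0 g f, tmul_neg, map_neg]

lemma a32_cycle (h g f : VF) :
    alpha32 k VB VF abar ((h ⊗ₜ g) ⊗ₜ f) = - alpha31 k VB VF abar ((g ⊗ₜ f) ⊗ₜ h) := by
  rw [alpha32_eq, alpha31_eq, PsiPhi k VB VF abar habar0]

end signs2

section core

variable (habar0 : ∀ f : VF, abar (f ⊗ₜ f) = 0)
variable (hN : LinearMap.range (alpha31 k VB VF abar - alpha32 k VB VF abar) ≤
    LinearMap.range (TensorProduct.map RB.subtype (LinearMap.id (R := k) (M := VF))))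
include habar0 hN

lemma CL31 : ∀ X, alpha31 k VB VF abar X ∈
    LinearMap.range (TensorProduct.map RB.subtype (LinearMap.id (R := k) (M := VF))) := by
  set N := LinearMap.range (TensorProduct.map RB.subtype (LinearMap.id (R := k) (M := VF)))
    with hNdef
  have hq : ∀ X, N.mkQ (alpha31 k VB VF abar X) = N.mkQ (alpha32 k VB VF abar X) := by
    intro X
    have : (alpha31 k VB VF abar - alpha32 k VB VF abar) X ∈ N :=
      hN (LinearMap.mem_range_self _ X)
    rw [LinearMap.sub_apply] at this
    have h0 : N.mkQ (alpha31 k VB VF abar X - alpha32 k VB VF abar X) = 0 :=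
      (Submodule.Quotient.mk_eq_zero N).mpr this
    rw [map_sub, sub_eq_zero] at h0
    exact h0
  have pure : ∀ h g f : VF, alpha31 k VB VF abar ((h ⊗ₜ g) ⊗ₜ f) ∈ N := by
    intro h g f
    set a := N.mkQ (alpha31 k VB VF abar ((h ⊗ₜ g) ⊗ₜ f)) with ha
    have key : a = - a := by
      calc a = N.mkQ (alpha32 k VB VF abar ((h ⊗ₜ g) ⊗ₜ f)) := hq _
        _ = - N.mkQ (alpha32 k VB VF abar ((h ⊗ₜ f) ⊗ₜ g)) := by
              rw [a32_swap23 k VB VF abar habar0 h g f, map_neg]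
        _ = - N.mkQ (alpha31 k VB VF abar ((h ⊗ₜ f) ⊗ₜ g)) := by rw [hq]
        _ = N.mkQ (alpha31 k VB VF abar ((f ⊗ₜ h) ⊗ₜ g)) := by
              rw [a31_swap12 k VB VF abar habar0 h f g, map_neg, neg_neg]
        _ = N.mkQ (alpha32 k VB VF abar ((f ⊗ₜ h) ⊗ₜ g)) := hq _
        _ = - a := by
              rw [a32_cycle k VB VF abar habar0 f h g, map_neg, ha]
    have h2a : (2 : k) • a = 0 := by
      rw [two_smul]
      nth_rewrite 2 [key]
      exact add_neg_cancel a
    have ha0 : a = 0 := by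
      have := congrArg (fun z => ((2 : k)⁻¹) • z) h2a
      simpa [smul_smul, inv_mul_cancel₀ (two_ne_zero (α := k))] using this
    rw [ha] at ha0
    exact (Submodule.Quotient.mk_eq_zero N).mp ha0
  intro X
  induction X using TensorProduct.induction_on with
  | zero => simp
  | tmul t1 f =>
      induction t1 using TensorProduct.induction_on with
      | zero => simp
      | tmul h g => exact pure h g f
      | add u1 u2 h1 h2 =>
          rw [add_tmul, map_add]; exact N.add_mem h1 h2
  | add X1 X2 h1 h2 =>
      rw [map_add]; exact N.add_mem h1 h2

lemma CL32 : ∀ X, alpha32 k VB VF abar X ∈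
    LinearMap.range (TensorProduct.map RB.subtype (LinearMap.id (R := k) (M := VF))) := by
  intro X
  have h1 := CL31 k VB VF RB abar habar0 hN X
  have h2 : (alpha31 k VB VF abar - alpha32 k VB VF abar) X ∈
      LinearMap.range (TensorProduct.map RB.subtype (LinearMap.id (R := k) (M := VF))) :=
    hN (LinearMap.mem_range_self _ X)
  rw [LinearMap.sub_apply] at h2
  have := Submodule.sub_mem _ h1 h2
  simpa using this

end core

lemma mu3_N (y : YB k VB RB) {n : ExteriorAlgebra k VB ⊗[k] VF}
    (hn : n ∈ LinearMap.range (TensorProduct.map RB.subtype (LinearMap.id (R := k) (M := VF)))) :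
    mu3 k VB VF RB (y ⊗ₜ n) = 0 := by
  obtain ⟨m, rfl⟩ := hn
  induction m using TensorProduct.induction_on with
  | zero => simp
  | tmul r f =>
      simp [mkB_zero_of_mem k VB RB r.2]
  | add m1 m2 h1 h2 =>
      rw [map_add, tmul_add, map_add, h1, h2, add_zero]

end Stmt18
namespace Stmt18
set_option linter.unusedSectionVars false

open TensorProduct

variable (k : Type*) [Field k] [CharZero k]
  (VB VF : Type*) [AddCommGroup VB] [Module k VB] [AddCommGroup VF] [Module k VF]
  (RB : Submodule k (ExteriorAlgebra k VB))
  (abar : VF ⊗[k] VF →ₗ[k] VB ⊗[k] VF)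

/-- bridge between `mu2` after a `betaB`-multiplication and `mu3` of a wedge. -/
lemma mu2_mu3_bridge (y : YB k VB RB) (c : VB) (w : VB ⊗[k] VF) :
    mu2 k VB VF RB ((y * betaB k VB RB c) ⊗ₜ w) =
      mu3 k VB VF RB (y ⊗ₜ (TensorProduct.map (wedgeB k VB) LinearMap.id
        ((TensorProduct.assoc k VB VB VF).symm (c ⊗ₜ w)))) := by
  induction w using TensorProduct.induction_on with
  | zero => simp
  | tmul c' k' =>
      simp [mul_assoc, map_mul, betaB_apply]
  | add w1 w2 h1 h2 =>
      rw [tmul_add, map_add, tmul_add, map_add, map_add, tmul_add, map_add, h1, h2]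

/-- `G(μ₂(y ⊗ u) ⊗ f) = μ₃(y ⊗ Φ₃₁(u ⊗ f))`. -/
lemma KC1 (y : YB k VB RB) (u : VB ⊗[k] VF) (f : VF) :
    Gmap k VB VF RB abar (mu2 k VB VF RB (y ⊗ₜ u) ⊗ₜ f) =
      mu3 k VB VF RB (y ⊗ₜ Phi31 k VB VF abar (u ⊗ₜ f)) := by
  induction u using TensorProduct.induction_on with
  | zero => simp
  | tmul c kk =>
      rw [mu2_tmul, Gmap_tmul, Phi31_tmul, mu2_mu3_bridge]
  | add u1 u2 h1 h2 =>
      rw [tmul_add, map_add, add_tmul, map_add, h1, h2, add_tmul, map_add, tmul_add, map_add]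

/-- `J(t ⊗ (c ⊗ k)) = G(H(t ⊗ c) ⊗ k)` packaged linearly in the second slot. -/
noncomputable def Jmap : (YB k VB RB ⊗[k] VF) ⊗[k] (VB ⊗[k] VF) →ₗ[k] YB k VB RB ⊗[k] VF :=
  Gmap k VB VF RB abar ∘ₗ
    TensorProduct.map (Hmap k VB VF RB) LinearMap.id ∘ₗ
    (TensorProduct.assoc k (YB k VB RB ⊗[k] VF) VB VF).symm.toLinearMap

@[simp] lemma Jmap_tmul (t : YB k VB RB ⊗[k] VF) (c : VB) (kk : VF) :
    Jmap k VB VF RB abar (t ⊗ₜ (c ⊗ₜ kk)) =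
      Gmap k VB VF RB abar (Hmap k VB VF RB (t ⊗ₜ c) ⊗ₜ kk) := by
  simp [Jmap]

/-- `J((y ⊗ h) ⊗ u) = μ₃(y ⊗ Ψ(h ⊗ u))`. -/
lemma KC2 (y : YB k VB RB) (h : VF) (u : VB ⊗[k] VF) :
    Jmap k VB VF RB abar ((y ⊗ₜ h) ⊗ₜ u) =
      mu3 k VB VF RB (y ⊗ₜ Psi k VB VF abar (h ⊗ₜ u)) := by
  induction u using TensorProduct.induction_on with
  | zero => simp
  | tmul c kk =>
      rw [Jmap_tmul, Hmap_tmul, Gmap_tmul, Psi_tmul, mu2_mu3_bridge]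
  | add u1 u2 h1 h2 =>
      rw [tmul_add, map_add, tmul_add, map_add, tmul_add, map_add, h1, h2]

/-- `H(H(t ⊗ a) ⊗ b) = ν(t ⊗ (ι a * ι b))`. -/
lemma HH (t : YB k VB RB ⊗[k] VF) (a b : VB) :
    Hmap k VB VF RB (Hmap k VB VF RB (t ⊗ₜ a) ⊗ₜ b) =
      nuE k VB VF RB (t ⊗ₜ (ExteriorAlgebra.ι k a * ExteriorAlgebra.ι k b)) := by
  induction t using TensorProduct.induction_on with
  | zero => simp
  | tmul y h =>
      simp [mul_assoc, map_mul, betaB_apply]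
  | add t1 t2 h1 h2 =>
      rw [add_tmul, map_add, add_tmul, map_add, add_tmul, map_add, h1, h2]

lemma HH_sq (t : YB k VB RB ⊗[k] VF) (b : VB) :
    Hmap k VB VF RB (Hmap k VB VF RB (t ⊗ₜ b) ⊗ₜ b) = 0 := by
  rw [HH, ExteriorAlgebra.ι_sq_zero, tmul_zero, map_zero]

lemma HG_sub (y : YB k VB RB) (b : VB) (u : VB ⊗[k] VF) :
    Hmap k VB VF RB (mu2 k VB VF RB (y ⊗ₜ u) ⊗ₜ b) +
      mu2 k VB VF RB ((y * betaB k VB RB b) ⊗ₜ u) = 0 := by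
  induction u using TensorProduct.induction_on with
  | zero => simp
  | tmul c kk =>
      rw [mu2_tmul, Hmap_tmul, mu2_tmul]
      rw [show y * betaB k VB RB c * betaB k VB RB b
            = -(y * betaB k VB RB b * betaB k VB RB c) by
          rw [mul_assoc, betaB_swap k VB RB c b, mul_neg, mul_assoc]]
      rw [neg_tmul, neg_add_cancel]
  | add u1 u2 h1 h2 =>
      rw [tmul_add, map_add, add_tmul, map_add, tmul_add, map_add,
        add_add_add_comm, h1, h2, add_zero]

lemma HG_GH (t : YB k VB RB ⊗[k] VF) (b : VB) (f : VF) :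
    Hmap k VB VF RB (Gmap k VB VF RB abar (t ⊗ₜ f) ⊗ₜ b) +
      Gmap k VB VF RB abar (Hmap k VB VF RB (t ⊗ₜ b) ⊗ₜ f) = 0 := by
  induction t using TensorProduct.induction_on with
  | zero => simp
  | tmul y h =>
      rw [Gmap_tmul, Hmap_tmul, Gmap_tmul, HG_sub]
  | add t1 t2 h1 h2 =>
      rw [add_tmul, map_add, add_tmul, map_add, add_tmul, map_add, add_tmul, map_add,
        add_add_add_comm, h1, h2, add_zero]

section withCL

variable (habar0 : ∀ f : VF, abar (f ⊗ₜ f) = 0)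
variable (hN : LinearMap.range (alpha31 k VB VF abar - alpha32 k VB VF abar) ≤
    LinearMap.range (TensorProduct.map RB.subtype (LinearMap.id (R := k) (M := VF))))
include habar0 hN

lemma GG_zero (t : YB k VB RB ⊗[k] VF) (f : VF) :
    Gmap k VB VF RB abar (Gmap k VB VF RB abar (t ⊗ₜ f) ⊗ₜ f) = 0 := by
  induction t using TensorProduct.induction_on with
  | zero => simp
  | tmul y h =>
      rw [Gmap_tmul, KC1, ← alpha31_eq]
      exact mu3_N k VB VF RB y (CL31 k VB VF RB abar habar0 hN _)
  | add t1 t2 h1 h2 =>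
      rw [add_tmul, map_add, add_tmul, map_add, h1, h2, add_zero]

end withCL

end Stmt18
namespace Stmt18
set_option linter.unusedSectionVars false
set_option maxHeartbeats 1000000

open TensorProduct

variable (k : Type*) [Field k] [CharZero k]
  (VB VF : Type*) [AddCommGroup VB] [Module k VB] [AddCommGroup VF] [Module k VF]
  (RB : Submodule k (ExteriorAlgebra k VB))
  (abar : VF ⊗[k] VF →ₗ[k] VB ⊗[k] VF)

lemma incB_ι (b : VB) :
    incB k VB VF (ExteriorAlgebra.ι k b) = ExteriorAlgebra.ι k (b, (0 : VF)) := by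
  rw [incB, ExteriorAlgebra.map_apply_ι, LinearMap.inl_apply]

lemma incF_ι (f : VF) :
    incF k VB VF (ExteriorAlgebra.ι k f) = ExteriorAlgebra.ι k ((0 : VB), f) := by
  rw [incF, ExteriorAlgebra.map_apply_ι, LinearMap.inr_apply]

lemma projF_ι (v : VB × VF) :
    projF k VB VF (ExteriorAlgebra.ι k v) = ExteriorAlgebra.ι k v.2 := by
  rw [projF, ExteriorAlgebra.map_apply_ι, LinearMap.snd_apply]

lemma mixMap_tmul (c : VB) (kk : VF) :
    mixMap k VB VF (c ⊗ₜ kk) =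
      ExteriorAlgebra.ι k (c, (0 : VF)) * ExteriorAlgebra.ι k ((0 : VB), kk) := by
  simp [mixMap]

/-- The right action of `V = V_B × V_F` on `M = Y_B × (Y_B ⊗ V_F)`. -/
noncomputable def act : (VB × VF) →ₗ[k]
    (YB k VB RB × (YB k VB RB ⊗[k] VF)) →ₗ[k] (YB k VB RB × (YB k VB RB ⊗[k] VF)) :=
  LinearMap.mk₂ k
    (fun v m => (m.1 * betaB k VB RB v.1,
      m.1 ⊗ₜ[k] v.2 - Hmap k VB VF RB (m.2 ⊗ₜ[k] v.1) + Gmap k VB VF RB abar (m.2 ⊗ₜ[k] v.2)))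
    (fun v v' m =>
      Prod.ext
        (by simp only [Prod.fst_add, map_add, mul_add])
        (by simp only [Prod.snd_add, Prod.fst_add, map_add, tmul_add]; abel))
    (fun c v m =>
      Prod.ext
        (by simp only [Prod.smul_fst, Prod.smul_snd, map_smul, mul_smul_comm])
        (by simp only [Prod.smul_fst, Prod.smul_snd, map_smul, tmul_smul, smul_sub, smul_add]))
    (fun v m m' =>
      Prod.ext
        (by simp only [Prod.fst_add, map_add, add_mul])
        (by simp only [Prod.snd_add, Prod.fst_add, add_tmul, map_add]; abel))
    (fun c m m' =>
      Prod.ext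
        (by simp only [Prod.smul_fst, Prod.smul_snd, smul_mul_assoc])
        (by simp only [Prod.smul_fst, Prod.smul_snd, ← smul_tmul', map_smul, smul_sub, smul_add]))

lemma act_apply (v : VB × VF) (m : YB k VB RB × (YB k VB RB ⊗[k] VF)) :
    act k VB VF RB abar v m = (m.1 * betaB k VB RB v.1,
      m.1 ⊗ₜ[k] v.2 - Hmap k VB VF RB (m.2 ⊗ₜ[k] v.1)
        + Gmap k VB VF RB abar (m.2 ⊗ₜ[k] v.2)) := rfl

private lemma abel_aux1 {M : Type*} [AddCommGroup M] (A Q : M) :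
    A - (A - 0 + -Q) + (0 - Q + 0) = 0 := by abel

section withHyp

variable (habar0 : ∀ f : VF, abar (f ⊗ₜ f) = 0)
variable (hN : LinearMap.range (alpha31 k VB VF abar - alpha32 k VB VF abar) ≤
    LinearMap.range (TensorProduct.map RB.subtype (LinearMap.id (R := k) (M := VF))))
include habar0 hN


lemma act_act (v : VB × VF) (m : YB k VB RB × (YB k VB RB ⊗[k] VF)) :
    act k VB VF RB abar v (act k VB VF RB abar v m) = 0 := by
  obtain ⟨b, f⟩ := v
  obtain ⟨y, t⟩ := m
  rw [act_apply, act_apply, Prod.mk_eq_zero]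
  constructor
  · dsimp only
    rw [mul_assoc, betaB_sq, mul_zero]
  · dsimp only
    have hP : Hmap k VB VF RB (Gmap k VB VF RB abar (t ⊗ₜ[k] f) ⊗ₜ[k] b) =
        - Gmap k VB VF RB abar (Hmap k VB VF RB (t ⊗ₜ[k] b) ⊗ₜ[k] f) :=
      eq_neg_of_add_eq_zero_left (HG_GH k VB VF RB abar t b f)
    rw [add_tmul, sub_tmul, add_tmul, sub_tmul, map_add, map_sub, map_add, map_sub,
      Hmap_tmul, HH_sq, Gmap_tmul, habar0 f, tmul_zero, map_zero,
      GG_zero k VB VF RB abar habar0 hN, hP]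
    exact abel_aux1 _ _

/-- The induced algebra map `⋀V → (End M)ᵐᵒᵖ`. -/
noncomputable def AA : ExteriorAlgebra k (VB × VF) →ₐ[k]
    (Module.End k (YB k VB RB × (YB k VB RB ⊗[k] VF)))ᵐᵒᵖ :=
  ExteriorAlgebra.lift k
    ⟨(MulOpposite.opLinearEquiv k).toLinearMap ∘ₗ act k VB VF RB abar, by
      intro v
      simp only [LinearMap.comp_apply, LinearEquiv.coe_coe, MulOpposite.coe_opLinearEquiv]
      rw [← MulOpposite.op_mul, MulOpposite.op_eq_zero_iff]
      apply LinearMap.ext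
      intro m
      rw [Module.End.mul_apply, act_act k VB VF RB abar habar0 hN, LinearMap.zero_apply]⟩

lemma AA_ι (v : VB × VF) :
    AA k VB VF RB abar habar0 hN (ExteriorAlgebra.ι k v) =
      MulOpposite.op (act k VB VF RB abar v) := by
  rw [AA, ExteriorAlgebra.lift_ι_apply]
  rfl

lemma unop_AA_mul (x y : ExteriorAlgebra k (VB × VF)) :
    (AA k VB VF RB abar habar0 hN (x * y)).unop =
      (AA k VB VF RB abar habar0 hN y).unop ∘ₗ (AA k VB VF RB abar habar0 hN x).unop := by
  rw [map_mul, MulOpposite.unop_mul]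
  rfl

lemma AA_incB_prod :
    ∀ x ∈ LinearMap.range (ExteriorAlgebra.ι k (M := VB)) *
        LinearMap.range (ExteriorAlgebra.ι k (M := VB)),
      ∀ (y : YB k VB RB) (t : YB k VB RB ⊗[k] VF),
        (AA k VB VF RB abar habar0 hN (incB k VB VF x)).unop (y, t) =
          (y * mkB k VB RB x, nuE k VB VF RB (t ⊗ₜ x)) := by
  intro x hx
  refine Submodule.mul_induction_on
    (C := fun x => ∀ (y : YB k VB RB) (t : YB k VB RB ⊗[k] VF),
      (AA k VB VF RB abar habar0 hN (incB k VB VF x)).unop (y, t) =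
        (y * mkB k VB RB x, nuE k VB VF RB (t ⊗ₜ x))) hx ?_ ?_
  · rintro m ⟨a, rfl⟩ n ⟨b, rfl⟩ y t
    rw [map_mul, unop_AA_mul, LinearMap.comp_apply, incB_ι, incB_ι, AA_ι, AA_ι,
      MulOpposite.unop_op, MulOpposite.unop_op, act_apply, act_apply]
    rw [Prod.mk.injEq]
    constructor
    · rw [map_mul, mul_assoc, betaB_apply, betaB_apply]
    · simp only [tmul_zero, map_zero, zero_sub, sub_zero, add_zero, neg_tmul, map_neg, neg_neg]
      have e : ∀ X : YB k VB RB ⊗[k] VF, Hmap k VB VF RB ((-X) ⊗ₜ[k] b) = -(Hmap k VB VF RB (X ⊗ₜ[k] b)) :=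
        fun X => eq_neg_of_add_eq_zero_left (by rw [← map_add, ← add_tmul, neg_add_cancel, zero_tmul, map_zero])
      show -(Hmap k VB VF RB ((-(Hmap k VB VF RB (t ⊗ₜ[k] a))) ⊗ₜ[k] b)) = _
      rw [e, neg_neg, HH]
  · intro x1 x2 ih1 ih2 y t
    rw [map_add, map_add, MulOpposite.unop_add, LinearMap.add_apply, ih1, ih2,
      map_add, mul_add, tmul_add, map_add, Prod.mk_add_mk]

lemma AA_incB_fst (x : ExteriorAlgebra k VB) (y : YB k VB RB) :
    (AA k VB VF RB abar habar0 hN (incB k VB VF x)).unop (y, 0) = (y * mkB k VB RB x, 0) := by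
  induction x using ExteriorAlgebra.induction generalizing y with
  | algebraMap r =>
      rw [AlgHom.commutes, AlgHom.commutes, MulOpposite.algebraMap_apply, MulOpposite.unop_op,
        Module.algebraMap_end_apply, Prod.smul_mk, smul_zero, AlgHom.commutes,
        ← Algebra.commutes, ← Algebra.smul_def]
  | ι b =>
      rw [incB_ι, AA_ι, MulOpposite.unop_op, act_apply]
      simp only
      rw [tmul_zero, zero_tmul, zero_tmul, map_zero, map_zero, sub_zero, add_zero, betaB_apply]
  | mul x1 x2 ih1 ih2 =>
      rw [map_mul, unop_AA_mul, LinearMap.comp_apply, ih1, ih2, map_mul, mul_assoc]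
  | add x1 x2 ih1 ih2 =>
      rw [map_add, map_add, MulOpposite.unop_add, LinearMap.add_apply, ih1, ih2,
        map_add, mul_add, Prod.mk_add_mk, add_zero]

lemma AA_mix_apply (u : VB ⊗[k] VF) (y : YB k VB RB) (t : YB k VB RB ⊗[k] VF) :
    (AA k VB VF RB abar habar0 hN (mixMap k VB VF u)).unop (y, t) =
      (0, mu2 k VB VF RB (y ⊗ₜ u) - Jmap k VB VF RB abar (t ⊗ₜ u)) := by
  induction u using TensorProduct.induction_on with
  | zero =>
      rw [map_zero, map_zero, MulOpposite.unop_zero, LinearMap.zero_apply,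
        tmul_zero, tmul_zero, map_zero, map_zero, sub_zero]
      rfl
  | tmul c kk =>
      rw [mixMap_tmul, unop_AA_mul, LinearMap.comp_apply, AA_ι, AA_ι,
        MulOpposite.unop_op, MulOpposite.unop_op, act_apply, act_apply]
      rw [Prod.mk.injEq]
      constructor
      · rw [map_zero, mul_zero]
      · simp only [tmul_zero, map_zero, zero_sub, sub_zero, add_zero, neg_tmul, map_neg, neg_neg,
          mul_zero, zero_tmul]
        rw [mu2_tmul, Jmap_tmul, sub_eq_add_neg]
        have e : ∀ X : YB k VB RB ⊗[k] VF,
            Gmap k VB VF RB abar ((-X) ⊗ₜ[k] kk) = -(Gmap k VB VF RB abar (X ⊗ₜ[k] kk)) :=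
          fun X => eq_neg_of_add_eq_zero_left (by rw [← map_add, ← add_tmul, neg_add_cancel, zero_tmul, map_zero])
        show _ + Gmap k VB VF RB abar ((-(Hmap k VB VF RB (t ⊗ₜ[k] c))) ⊗ₜ[k] kk) = _
        rw [e]
  | add u1 u2 ih1 ih2 =>
      rw [map_add, map_add, MulOpposite.unop_add, LinearMap.add_apply, ih1, ih2,
        tmul_add, map_add, tmul_add, map_add, Prod.mk_add_mk, add_zero]
      congr 1
      abel

lemma GG_J (t : YB k VB RB ⊗[k] VF) (g f : VF) :
    Gmap k VB VF RB abar (Gmap k VB VF RB abar (t ⊗ₜ g) ⊗ₜ f) =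
      - Jmap k VB VF RB abar (t ⊗ₜ abar (g ⊗ₜ f)) := by
  induction t using TensorProduct.induction_on with
  | zero => simp
  | tmul y h =>
      rw [Gmap_tmul, KC1, ← alpha31_eq, KC2, ← alpha32_eq]
      rw [mu3_N k VB VF RB y (CL31 k VB VF RB abar habar0 hN _),
        mu3_N k VB VF RB y (CL32 k VB VF RB abar habar0 hN _), neg_zero]
  | add t1 t2 ih1 ih2 =>
      rw [add_tmul, map_add, add_tmul, map_add, ih1, ih2, add_tmul, map_add, neg_add]

end withHyp

end Stmt18
namespace Stmt18
set_option linter.unusedSectionVars false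

open TensorProduct

variable (k : Type*) [Field k] [CharZero k]
  (VB VF : Type*) [AddCommGroup VB] [Module k VB] [AddCommGroup VF] [Module k VF]
  (RB : Submodule k (ExteriorAlgebra k VB))

lemma nuE_mem_zero {x : ExteriorAlgebra k VB} (hx : x ∈ RB) (t : YB k VB RB ⊗[k] VF) :
    nuE k VB VF RB (t ⊗ₜ x) = 0 := by
  induction t using TensorProduct.induction_on with
  | zero => rw [zero_tmul, map_zero]
  | tmul y h => rw [nuE_tmul, mkB_zero_of_mem k VB RB hx, mul_zero, zero_tmul]
  | add t1 t2 ih1 ih2 => rw [add_tmul, map_add, ih1, ih2, add_zero]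

lemma projF_mixMap (u : VB ⊗[k] VF) : projF k VB VF (mixMap k VB VF u) = 0 := by
  induction u using TensorProduct.induction_on with
  | zero => rw [map_zero, map_zero]
  | tmul c kk =>
      rw [mixMap_tmul, map_mul, projF_ι, projF_ι]
      simp
  | add u1 u2 ih1 ih2 => rw [map_add, map_add, ih1, ih2, add_zero]

lemma projF_sq_mem :
    ∀ x ∈ (LinearMap.range ((ExteriorAlgebra.ι k).comp (LinearMap.inr k VB VF))) ^ 2,
      projF k VB VF x ∈ LinearMap.range (ExteriorAlgebra.ι k (M := VF)) ^ 2 := by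
  intro x hx
  rw [pow_two] at hx
  refine Submodule.mul_induction_on
    (C := fun x => projF k VB VF x ∈ LinearMap.range (ExteriorAlgebra.ι k (M := VF)) ^ 2)
    hx ?_ ?_
  · rintro m ⟨g, rfl⟩ n ⟨f, rfl⟩
    rw [map_mul]
    simp only [LinearMap.comp_apply, LinearMap.inr_apply, projF_ι]
    rw [pow_two]
    exact Submodule.mul_mem_mul (LinearMap.mem_range_self _ g) (LinearMap.mem_range_self _ f)
  · intro x1 x2 h1 h2
    rw [map_add]
    exact Submodule.add_mem _ h1 h2

end Stmt18
set_option maxHeartbeats 3000000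
set_option synthInstance.maxHeartbeats 1000000
open TensorProduct


/-- Freeness of a quadratic algebra over its base: `Y = ⋀V/⟨R⟩` is a free
`Y_B = ⋀V_B/⟨R_B⟩`-module with fiber `k ⊕ V_F`, under the graph and
associativity conditions on the relations. -/
theorem stmt_18 (k : Type*) [Field k] [CharZero k]
    (VB VF : Type*) [AddCommGroup VB] [Module k VB] [FiniteDimensional k VB]
    [AddCommGroup VF] [Module k VF] [FiniteDimensional k VF]
    (R RF : Submodule k (ExteriorAlgebra k (VB × VF)))
    (RB : Submodule k (ExteriorAlgebra k VB))
    -- `R_B ⊆ ⋀²V_B`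
    (hRB : RB ≤ LinearMap.range (ExteriorAlgebra.ι k (M := VB)) ^ 2)
    -- `R_F ⊆ (V_B ⊗ V_F) ⊕ ⋀²V_F`
    (hRF : RF ≤ LinearMap.range (mixMap k VB VF) ⊔
      LinearMap.range ((ExteriorAlgebra.ι k).comp (LinearMap.inr k VB VF)) ^ 2)
    -- `R = R_B ⊕ R_F`
    (hRsum : R = Submodule.map (incB k VB VF).toLinearMap RB ⊔ RF)
    (hRdisj : Disjoint (Submodule.map (incB k VB VF).toLinearMap RB) RF)
    -- (1): `π_F` restricts to a linear isomorphism `R_F ≅ ⋀²V_F`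
    (h1inj : ∀ x ∈ RF, projF k VB VF x = 0 → x = 0)
    (h1surj : Submodule.map (projF k VB VF).toLinearMap RF =
      LinearMap.range (ExteriorAlgebra.ι k (M := VF)) ^ 2)
    -- the map `α : ⋀²V_F → V_B ⊗ V_F`, `α(w) = −π_mix((π_F|_{R_F})⁻¹ w)`,
    -- characterized by `μ(α(π_F x)) = −π_mix x = incF(π_F x) − x` for `x ∈ R_F`
    (αmap : ExteriorAlgebra k VF →ₗ[k] VB ⊗[k] VF)
    (hα : ∀ x ∈ RF,
      mixMap k VB VF (αmap (projF k VB VF x)) = incF k VB VF (projF k VB VF x) - x)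
    -- (2): associativity, `im(α₃⁽¹⁾ − α₃⁽²⁾) ⊆ im(R_B ⊗ V_F)`;
    -- here `ᾱ = α ∘ (canonical surjection V_F ⊗ V_F → ⋀²V_F)`
    (h2 : LinearMap.range
        (alpha31 k VB VF (αmap ∘ₗ wedgeF k VF) - alpha32 k VB VF (αmap ∘ₗ wedgeF k VF)) ≤
      LinearMap.range (TensorProduct.map RB.subtype (LinearMap.id (R := k) (M := VF)))) :
    ∃ φ : RingQuot (fun a b : ExteriorAlgebra k VB => b = 0 ∧ a ∈ RB) →ₐ[k]
        RingQuot (fun a b : ExteriorAlgebra k (VB × VF) => b = 0 ∧ a ∈ R),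
      -- `φ` is the algebra homomorphism `Y_B → Y` induced by `V_B ↪ V`
      φ.comp (RingQuot.mkAlgHom k (fun a b : ExteriorAlgebra k VB => b = 0 ∧ a ∈ RB)) =
        (RingQuot.mkAlgHom k
          (fun a b : ExteriorAlgebra k (VB × VF) => b = 0 ∧ a ∈ R)).comp (incB k VB VF) ∧
      Function.Injective φ ∧
      -- `Y_B ⊕ (Y_B ⊗ V_F) → Y`, `(y, y′ ⊗ f) ↦ φ y + φ y′ · [ι f]`, is bijective
      Function.Bijective (fun p :
          RingQuot (fun a b : ExteriorAlgebra k VB => b = 0 ∧ a ∈ RB) ×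
          (RingQuot (fun a b : ExteriorAlgebra k VB => b = 0 ∧ a ∈ RB) ⊗[k] VF) =>
        φ p.1 + TensorProduct.lift
          ((LinearMap.mul k
              (RingQuot (fun a b : ExteriorAlgebra k (VB × VF) => b = 0 ∧ a ∈ R))).compl₁₂
            φ.toLinearMap
            ((RingQuot.mkAlgHom k
                (fun a b : ExteriorAlgebra k (VB × VF) => b = 0 ∧ a ∈ R)).toLinearMap ∘ₗ
              (ExteriorAlgebra.ι k).comp (LinearMap.inr k VB VF))) p.2) := by
  classical
  have habar0 : ∀ f : VF, (αmap ∘ₗ wedgeF k VF) (f ⊗ₜ[k] f) = 0 := by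
    intro f
    rw [LinearMap.comp_apply, Stmt18.wedgeF_tmul, ExteriorAlgebra.ι_sq_zero, map_zero]
  have hN : LinearMap.range
      (alpha31 k VB VF (αmap ∘ₗ wedgeF k VF) - alpha32 k VB VF (αmap ∘ₗ wedgeF k VF)) ≤
      LinearMap.range (TensorProduct.map RB.subtype (LinearMap.id (R := k) (M := VF))) := h2
  set abar : VF ⊗[k] VF →ₗ[k] VB ⊗[k] VF := αmap ∘ₗ wedgeF k VF with habarDef
  -- `mk` of elements of `R` vanish
  have hmkR : ∀ x ∈ R, RingQuot.mkAlgHom k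
      (fun a b : ExteriorAlgebra k (VB × VF) => b = 0 ∧ a ∈ R) x = 0 := by
    intro x hx
    have h := RingQuot.mkAlgHom_rel k
      (s := fun a b : ExteriorAlgebra k (VB × VF) => b = 0 ∧ a ∈ R) (x := x) (y := 0) ⟨rfl, hx⟩
    rwa [map_zero] at h
  have hmemR : ∀ x ∈ RB, incB k VB VF x ∈ R := by
    intro x hx
    rw [hRsum]
    exact Submodule.mem_sup_left (Submodule.mem_map_of_mem hx)
  -- AA kills the relations R
  have hAAR : ∀ x ∈ R, Stmt18.AA k VB VF RB abar habar0 hN x = 0 := by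
    intro x hx
    rw [hRsum, Submodule.mem_sup] at hx
    obtain ⟨p, hp, q, hq, rfl⟩ := hx
    have hp0 : Stmt18.AA k VB VF RB abar habar0 hN p = 0 := by
      obtain ⟨rB, hrB, rfl⟩ := hp
      have h2B := hRB hrB
      rw [pow_two] at h2B
      rw [← MulOpposite.unop_eq_zero_iff]
      apply LinearMap.ext
      rintro ⟨y, t⟩
      rw [AlgHom.toLinearMap_apply,
        Stmt18.AA_incB_prod k VB VF RB abar habar0 hN rB h2B y t,
        Stmt18.mkB_zero_of_mem k VB RB hrB, mul_zero,
        Stmt18.nuE_mem_zero k VB VF RB hrB, LinearMap.zero_apply]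
      rfl
    have hTT : ∀ w ∈ LinearMap.range (ExteriorAlgebra.ι k (M := VF)) *
        LinearMap.range (ExteriorAlgebra.ι k (M := VF)),
        Stmt18.AA k VB VF RB abar habar0 hN (incF k VB VF w) =
          Stmt18.AA k VB VF RB abar habar0 hN (mixMap k VB VF (αmap w)) := by
      intro w hw2
      refine Submodule.mul_induction_on
        (C := fun w => Stmt18.AA k VB VF RB abar habar0 hN (incF k VB VF w) =
          Stmt18.AA k VB VF RB abar habar0 hN (mixMap k VB VF (αmap w))) hw2 ?_ ?_
      · rintro m ⟨g, rfl⟩ n ⟨f, rfl⟩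
        have hab : αmap (ExteriorAlgebra.ι k g * ExteriorAlgebra.ι k f) = abar (g ⊗ₜ[k] f) := by
          rw [habarDef, LinearMap.comp_apply, Stmt18.wedgeF_tmul]
        rw [hab]
        apply MulOpposite.unop_injective
        apply LinearMap.ext
        rintro ⟨y, t⟩
        rw [map_mul, Stmt18.unop_AA_mul k VB VF RB abar habar0 hN, LinearMap.comp_apply,
          Stmt18.incF_ι, Stmt18.incF_ι, Stmt18.AA_ι, Stmt18.AA_ι, MulOpposite.unop_op, MulOpposite.unop_op,
          Stmt18.act_apply, Stmt18.act_apply,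
          Stmt18.AA_mix_apply k VB VF RB abar habar0 hN (abar (g ⊗ₜ[k] f)) y t]
        dsimp only
        rw [Prod.mk.injEq]
        constructor
        · rw [map_zero, mul_zero]
        · simp only [map_zero, mul_zero, zero_tmul, tmul_zero, sub_zero, zero_add, add_zero]
          rw [add_tmul, map_add, Stmt18.Gmap_tmul,
            Stmt18.GG_J k VB VF RB abar habar0 hN t g f, sub_eq_add_neg]
      · intro w1 w2 ih1 ih2
        simp only [map_add]
        rw [ih1, ih2]
    have hq0 : Stmt18.AA k VB VF RB abar habar0 hN q = 0 := by
      obtain ⟨mxu, hmxu, qx, hqx, heq⟩ := Submodule.mem_sup.mp (hRF hq)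
      have hw : projF k VB VF q ∈ LinearMap.range (ExteriorAlgebra.ι k (M := VF)) ^ 2 := by
        rw [← heq, map_add]
        obtain ⟨u, rfl⟩ := hmxu
        rw [Stmt18.projF_mixMap, zero_add]
        exact Stmt18.projF_sq_mem k VB VF qx hqx
      have hqe : q = incF k VB VF (projF k VB VF q) -
          mixMap k VB VF (αmap (projF k VB VF q)) := by
        rw [hα q hq, sub_sub_cancel]
      rw [pow_two] at hw
      rw [hqe, map_sub, hTT _ hw, sub_self]
    rw [map_add, hp0, hq0, add_zero]
  -- the algebra map φ : Y_B → Y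
  set φ0 : RingQuot (fun a b : ExteriorAlgebra k VB => b = 0 ∧ a ∈ RB) →ₐ[k]
      RingQuot (fun a b : ExteriorAlgebra k (VB × VF) => b = 0 ∧ a ∈ R) :=
    RingQuot.liftAlgHom k
      ⟨(RingQuot.mkAlgHom k
          (fun a b : ExteriorAlgebra k (VB × VF) => b = 0 ∧ a ∈ R)).comp (incB k VB VF), by
        rintro x y ⟨rfl, hx⟩
        rw [AlgHom.comp_apply, AlgHom.comp_apply, map_zero, map_zero]
        exact hmkR _ (hmemR x hx)⟩ with hφ0def
  -- the lifted action on Y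
  set Aq : RingQuot (fun a b : ExteriorAlgebra k (VB × VF) => b = 0 ∧ a ∈ R) →ₐ[k]
      (Module.End k (Stmt18.YB k VB RB × (Stmt18.YB k VB RB ⊗[k] VF)))ᵐᵒᵖ :=
    RingQuot.liftAlgHom k ⟨Stmt18.AA k VB VF RB abar habar0 hN, by
      rintro x y ⟨rfl, hx⟩
      rw [map_zero]
      exact hAAR x hx⟩ with hAqdef
  set PsiF : RingQuot (fun a b : ExteriorAlgebra k (VB × VF) => b = 0 ∧ a ∈ R) →
      Stmt18.YB k VB RB × (Stmt18.YB k VB RB ⊗[k] VF) :=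
    fun z => (Aq z).unop (1, 0) with hPsiFdef
  have hPsi_mk : ∀ x : ExteriorAlgebra k (VB × VF),
      PsiF (RingQuot.mkAlgHom k (fun a b : ExteriorAlgebra k (VB × VF) => b = 0 ∧ a ∈ R) x) =
        (Stmt18.AA k VB VF RB abar habar0 hN x).unop (1, 0) := by
    intro x
    simp only [hPsiFdef, hAqdef]
    rw [RingQuot.liftAlgHom_mkAlgHom_apply]
  have hφmk : ∀ xB : ExteriorAlgebra k VB,
      φ0 (RingQuot.mkAlgHom k (fun a b : ExteriorAlgebra k VB => b = 0 ∧ a ∈ RB) xB) =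
        RingQuot.mkAlgHom k (fun a b : ExteriorAlgebra k (VB × VF) => b = 0 ∧ a ∈ R)
          (incB k VB VF xB) := by
    intro xB
    simp only [hφ0def]
    rw [RingQuot.liftAlgHom_mkAlgHom_apply, AlgHom.comp_apply]
  set LL : Stmt18.YB k VB RB ⊗[k] VF →ₗ[k]
      RingQuot (fun a b : ExteriorAlgebra k (VB × VF) => b = 0 ∧ a ∈ R) :=
    TensorProduct.lift
      ((LinearMap.mul k
          (RingQuot (fun a b : ExteriorAlgebra k (VB × VF) => b = 0 ∧ a ∈ R))).compl₁₂
        φ0.toLinearMap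
        ((RingQuot.mkAlgHom k
            (fun a b : ExteriorAlgebra k (VB × VF) => b = 0 ∧ a ∈ R)).toLinearMap ∘ₗ
          (ExteriorAlgebra.ι k).comp (LinearMap.inr k VB VF))) with hLLdef
  have hLLtmul : ∀ (y' : Stmt18.YB k VB RB) (h : VF),
      LL (y' ⊗ₜ[k] h) = φ0 y' *
        RingQuot.mkAlgHom k (fun a b : ExteriorAlgebra k (VB × VF) => b = 0 ∧ a ∈ R)
          (ExteriorAlgebra.ι k ((0 : VB), h)) := by
    intro y' h
    simp only [hLLdef]
    rw [TensorProduct.lift.tmul]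
    simp only [LinearMap.compl₁₂_apply, LinearMap.mul_apply', AlgHom.toLinearMap_apply,
      LinearMap.comp_apply, LinearMap.inr_apply]
  have hswap : ∀ v w : VB × VF,
      RingQuot.mkAlgHom k (fun a b : ExteriorAlgebra k (VB × VF) => b = 0 ∧ a ∈ R)
          (ExteriorAlgebra.ι k v) *
        RingQuot.mkAlgHom k (fun a b : ExteriorAlgebra k (VB × VF) => b = 0 ∧ a ∈ R)
          (ExteriorAlgebra.ι k w) =
      -(RingQuot.mkAlgHom k (fun a b : ExteriorAlgebra k (VB × VF) => b = 0 ∧ a ∈ R)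
          (ExteriorAlgebra.ι k w) *
        RingQuot.mkAlgHom k (fun a b : ExteriorAlgebra k (VB × VF) => b = 0 ∧ a ∈ R)
          (ExteriorAlgebra.ι k v)) := by
    intro v w
    have h := congrArg
      (RingQuot.mkAlgHom k (fun a b : ExteriorAlgebra k (VB × VF) => b = 0 ∧ a ∈ R))
      (ExteriorAlgebra.ι_add_mul_swap (R := k) v w)
    rw [map_add, map_mul, map_mul, map_zero] at h
    exact eq_neg_of_add_eq_zero_left h
  have hφβ : ∀ b : VB, φ0 (Stmt18.betaB k VB RB b) =
      RingQuot.mkAlgHom k (fun a b : ExteriorAlgebra k (VB × VF) => b = 0 ∧ a ∈ R)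
        (ExteriorAlgebra.ι k ((b, 0) : VB × VF)) := by
    intro b
    rw [Stmt18.betaB_apply, Stmt18.mkB_def, hφmk, Stmt18.incB_ι]
  have hLH : ∀ (t : Stmt18.YB k VB RB ⊗[k] VF) (b : VB),
      LL (Stmt18.Hmap k VB VF RB (t ⊗ₜ[k] b)) =
        -(LL t * RingQuot.mkAlgHom k (fun a b : ExteriorAlgebra k (VB × VF) => b = 0 ∧ a ∈ R)
            (ExteriorAlgebra.ι k ((b, 0) : VB × VF))) := by
    intro t b
    induction t using TensorProduct.induction_on with
    | zero => simp only [zero_tmul, map_zero, zero_mul, neg_zero]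
    | tmul y' h =>
        rw [Stmt18.Hmap_tmul, hLLtmul, map_mul, hφβ, hLLtmul, mul_assoc, mul_assoc,
          hswap ((b, 0) : VB × VF) (((0 : VB), h) : VB × VF), mul_neg]
    | add t1 t2 ih1 ih2 =>
        simp only [add_tmul, map_add]
        rw [ih1, ih2, add_mul, neg_add]
  have hLmu2 : ∀ (y' : Stmt18.YB k VB RB) (u : VB ⊗[k] VF),
      LL (Stmt18.mu2 k VB VF RB (y' ⊗ₜ[k] u)) = φ0 y' *
        RingQuot.mkAlgHom k (fun a b : ExteriorAlgebra k (VB × VF) => b = 0 ∧ a ∈ R)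
          (mixMap k VB VF u) := by
    intro y' u
    induction u using TensorProduct.induction_on with
    | zero => rw [tmul_zero, map_zero, map_zero, map_zero, map_zero, mul_zero]
    | tmul c kk =>
        rw [Stmt18.mu2_tmul, hLLtmul, map_mul, hφβ, Stmt18.mixMap_tmul, map_mul, mul_assoc]
    | add u1 u2 ih1 ih2 =>
        rw [tmul_add, map_add, map_add, ih1, ih2, map_add, map_add, mul_add]
  have hKR : ∀ w ∈ LinearMap.range (ExteriorAlgebra.ι k (M := VF)) ^ 2,
      RingQuot.mkAlgHom k (fun a b : ExteriorAlgebra k (VB × VF) => b = 0 ∧ a ∈ R)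
          (mixMap k VB VF (αmap w)) =
        RingQuot.mkAlgHom k (fun a b : ExteriorAlgebra k (VB × VF) => b = 0 ∧ a ∈ R)
          (incF k VB VF w) := by
    intro w hw
    rw [← h1surj] at hw
    obtain ⟨x, hxRF, rfl⟩ := hw
    have hx0 : RingQuot.mkAlgHom k
        (fun a b : ExteriorAlgebra k (VB × VF) => b = 0 ∧ a ∈ R) x = 0 :=
      hmkR x (by rw [hRsum]; exact Submodule.mem_sup_right hxRF)
    rw [AlgHom.toLinearMap_apply, hα x hxRF, map_sub, hx0, sub_zero]
  have hLG : ∀ (t : Stmt18.YB k VB RB ⊗[k] VF) (f : VF),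
      LL (Stmt18.Gmap k VB VF RB abar (t ⊗ₜ[k] f)) =
        LL t * RingQuot.mkAlgHom k (fun a b : ExteriorAlgebra k (VB × VF) => b = 0 ∧ a ∈ R)
          (ExteriorAlgebra.ι k (((0 : VB), f) : VB × VF)) := by
    intro t f
    induction t using TensorProduct.induction_on with
    | zero => simp only [zero_tmul, map_zero, zero_mul]
    | tmul y' h =>
        rw [Stmt18.Gmap_tmul, hLmu2]
        have habt : abar (h ⊗ₜ[k] f) =
            αmap (ExteriorAlgebra.ι k h * ExteriorAlgebra.ι k f) := by
          rw [habarDef, LinearMap.comp_apply, Stmt18.wedgeF_tmul]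
        rw [habt, hKR (ExteriorAlgebra.ι k h * ExteriorAlgebra.ι k f)
          (by rw [pow_two]
              exact Submodule.mul_mem_mul (LinearMap.mem_range_self _ h)
                (LinearMap.mem_range_self _ f)),
          map_mul, Stmt18.incF_ι, Stmt18.incF_ι, map_mul, hLLtmul, mul_assoc]
    | add t1 t2 ih1 ih2 =>
        simp only [add_tmul, map_add]
        rw [ih1, ih2, add_mul]
  have keyC1 : ∀ x : ExteriorAlgebra k (VB × VF),
      ∀ m : Stmt18.YB k VB RB × (Stmt18.YB k VB RB ⊗[k] VF),
      φ0 ((Stmt18.AA k VB VF RB abar habar0 hN x).unop m).1 +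
        LL ((Stmt18.AA k VB VF RB abar habar0 hN x).unop m).2 =
      (φ0 m.1 + LL m.2) *
        RingQuot.mkAlgHom k (fun a b : ExteriorAlgebra k (VB × VF) => b = 0 ∧ a ∈ R) x := by
    intro x
    induction x using ExteriorAlgebra.induction with
    | algebraMap r =>
        intro m
        rw [AlgHom.commutes, MulOpposite.algebraMap_apply, MulOpposite.unop_op,
          Module.algebraMap_end_apply, Prod.smul_fst, Prod.smul_snd, map_smul, map_smul,
          ← smul_add, AlgHom.commutes, ← Algebra.commutes, ← Algebra.smul_def]
    | ι v =>
        obtain ⟨b, f⟩ := v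
        rintro ⟨y, t⟩
        rw [Stmt18.AA_ι, MulOpposite.unop_op, Stmt18.act_apply]
        dsimp only
        rw [map_add, map_sub, map_mul, hφβ, hLLtmul, hLH, hLG]
        have hvsplit : ExteriorAlgebra.ι k ((b, f) : VB × VF) =
            ExteriorAlgebra.ι k ((b, 0) : VB × VF) +
              ExteriorAlgebra.ι k (((0 : VB), f) : VB × VF) := by
          rw [← map_add, Prod.mk_add_mk, add_zero, zero_add]
        rw [hvsplit, map_add, mul_add, add_mul, add_mul]
        abel
    | mul x1 x2 ih1 ih2 =>
        intro m
        rw [Stmt18.unop_AA_mul, LinearMap.comp_apply, ih2, ih1, map_mul, mul_assoc]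
    | add x1 x2 ih1 ih2 =>
        intro m
        rw [map_add, MulOpposite.unop_add, LinearMap.add_apply, Prod.fst_add, Prod.snd_add,
          map_add, map_add, add_add_add_comm, ih1, ih2, map_add, mul_add]
  have hPsiAdd : ∀ z1 z2, PsiF (z1 + z2) = PsiF z1 + PsiF z2 := by
    intro z1 z2
    simp only [hPsiFdef]
    rw [map_add, MulOpposite.unop_add, LinearMap.add_apply]
  have hPsiφ : ∀ yB : RingQuot (fun a b : ExteriorAlgebra k VB => b = 0 ∧ a ∈ RB),
      PsiF (φ0 yB) = (yB, 0) := by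
    intro yB
    obtain ⟨xB, rfl⟩ := RingQuot.mkAlgHom_surjective k _ yB
    rw [hφmk, hPsi_mk, Stmt18.AA_incB_fst k VB VF RB abar habar0 hN xB 1, one_mul,
      Stmt18.mkB_def]
  have hPsiLL : ∀ t : Stmt18.YB k VB RB ⊗[k] VF, PsiF (LL t) = (0, t) := by
    intro t
    induction t using TensorProduct.induction_on with
    | zero =>
        rw [map_zero]
        simp only [hPsiFdef]
        rw [map_zero, MulOpposite.unop_zero, LinearMap.zero_apply]
        rfl
    | tmul y' h =>
        obtain ⟨xB, rfl⟩ := RingQuot.mkAlgHom_surjective k _ y'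
        rw [hLLtmul, hφmk, ← map_mul, hPsi_mk, Stmt18.unop_AA_mul, LinearMap.comp_apply,
          Stmt18.AA_incB_fst k VB VF RB abar habar0 hN xB 1, one_mul,
          Stmt18.AA_ι, MulOpposite.unop_op, Stmt18.act_apply]
        dsimp only
        simp only [map_zero, mul_zero, zero_tmul, sub_zero, add_zero]
        rw [Stmt18.mkB_def]
    | add t1 t2 ih1 ih2 =>
        rw [map_add, hPsiAdd, ih1, ih2, Prod.mk_add_mk, add_zero]
  refine ⟨φ0, ?_, ?_, ?_⟩
  · apply AlgHom.ext
    intro xB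
    rw [AlgHom.comp_apply, AlgHom.comp_apply, hφmk]
  · intro a b hab
    have h1 := hPsiφ a
    rw [hab, hPsiφ b] at h1
    exact (Prod.ext_iff.mp h1).1.symm
  · rw [Function.bijective_iff_has_inverse]
    refine ⟨PsiF, ?_, ?_⟩
    · rintro ⟨y, t⟩
      show PsiF (φ0 y + LL t) = (y, t)
      rw [hPsiAdd, hPsiφ, hPsiLL, Prod.mk_add_mk, add_zero, zero_add]
    · intro z
      obtain ⟨x, rfl⟩ := RingQuot.mkAlgHom_surjective k _ z
      show φ0 ((PsiF (RingQuot.mkAlgHom k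
          (fun a b : ExteriorAlgebra k (VB × VF) => b = 0 ∧ a ∈ R) x)).1) +
        LL ((PsiF (RingQuot.mkAlgHom k
          (fun a b : ExteriorAlgebra k (VB × VF) => b = 0 ∧ a ∈ R) x)).2) =
        RingQuot.mkAlgHom k (fun a b : ExteriorAlgebra k (VB × VF) => b = 0 ∧ a ∈ R) x
      rw [hPsi_mk, keyC1 x (1, 0)]
      dsimp only
      rw [map_one, map_zero, add_zero, one_mul]
end
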